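/- arXiv:1808.06371 — 3 statements merged into one kernel-verified Lean document; each statement's English description precedes it below -/
import Mathlib

section
/- Let m, m' be positive integers and let E : ℤᵐ → ℤ^{m'} be an integral affine transformation, i.e. E(p) = Ap + q for some m'×m matrix A with integer entries and some q ∈ ℤ^{m'}. If P ⊆ ℤᵐ is a polyhedral set, then the image E(P) ⊆ ℤ^{m'} is a polyhedral set. -/
/-- An elementary subset of `ℤᵐ`: a hyperplane, an open affine half-space, or a
congruence set, defined by the standard scalar product. -/
def IsElementarySet {m : ℕ} (E : Set (Fin m → ℤ)) : Prop :=
  (∃ (u : Fin m → ℤ) (a : ℤ), E = {z | (∑ i, u i * z i) = a}) ∨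
  (∃ (u : Fin m → ℤ) (a : ℤ), E = {z | (∑ i, u i * z i) > a}) ∨
  (∃ (u : Fin m → ℤ) (a : ℤ) (b : ℤ), 0 < b ∧ E = {z | (∑ i, u i * z i) ≡ a [ZMOD b]})

/-- A basic polyhedral set: a finite intersection of elementary sets. -/
def IsBasicPolyhedralSet {m : ℕ} (B : Set (Fin m → ℤ)) : Prop :=
  ∃ (k : ℕ) (E : Fin k → Set (Fin m → ℤ)),
    (∀ i, IsElementarySet (E i)) ∧ B = ⋂ i, E i

/-- A polyhedral set: a finite union of basic polyhedral sets. -/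
def IsPolyhedralSet {m : ℕ} (P : Set (Fin m → ℤ)) : Prop :=
  ∃ (k : ℕ) (B : Fin k → Set (Fin m → ℤ)),
    (∀ i, IsBasicPolyhedralSet (B i)) ∧ P = ⋃ i, B i

namespace PolyProof

variable {n m : ℕ}

/-- dot product -/
def dot (u z : Fin n → ℤ) : ℤ := ∑ i, u i * z i

lemma dot_sub (u v z : Fin n → ℤ) : dot (u - v) z = dot u z - dot v z := by
  simp [dot, sub_mul, Finset.sum_sub_distrib]

lemma dot_zero (z : Fin n → ℤ) : dot 0 z = 0 := by simp [dot]

lemma dot_smul (k : ℤ) (u z : Fin n → ℤ) : dot (k • u) z = k * dot u z := by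
  simp [dot, Finset.mul_sum, mul_assoc]

lemma dot_neg (u z : Fin n → ℤ) : dot (-u) z = -dot u z := by
  simp [dot, Finset.sum_neg_distrib]

lemma dot_neg_smul (k : ℤ) (u z : Fin n → ℤ) : dot ((-k) • u) z = -(k * dot u z) := by
  rw [neg_smul, ← smul_neg, dot_smul, dot_neg]; ring

lemma elem_eq (u : Fin n → ℤ) (a : ℤ) : IsElementarySet {z | dot u z = a} :=
  Or.inl ⟨u, a, rfl⟩

lemma elem_gt (u : Fin n → ℤ) (a : ℤ) : IsElementarySet {z | dot u z > a} :=
  Or.inr (Or.inl ⟨u, a, rfl⟩)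

lemma elem_mod (u : Fin n → ℤ) (a b : ℤ) (hb : 0 < b) :
    IsElementarySet {z | dot u z ≡ a [ZMOD b]} :=
  Or.inr (Or.inr ⟨u, a, b, hb, rfl⟩)

/-- intersection of a list of sets -/
def InterL {α : Type*} (L : List (Set α)) : Set α := {z | ∀ S ∈ L, z ∈ S}

/-- union of a list of sets -/
def UnionL {α : Type*} (L : List (Set α)) : Set α := {z | ∃ S ∈ L, z ∈ S}

lemma isBasic_interL (L : List (Set (Fin n → ℤ))) (h : ∀ S ∈ L, IsElementarySet S) :
    IsBasicPolyhedralSet (InterL L) := by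
  refine ⟨L.length, fun i => L.get i, fun i => h _ (L.get_mem i), ?_⟩
  ext z
  simp only [InterL, Set.mem_setOf_eq, Set.mem_iInter]
  constructor
  · intro hz i; exact hz _ (L.get_mem i)
  · intro hz S hS
    obtain ⟨i, hi, rfl⟩ := List.mem_iff_get.mp hS
    exact hz _

lemma isPoly_unionL (L : List (Set (Fin n → ℤ))) (h : ∀ S ∈ L, IsBasicPolyhedralSet S) :
    IsPolyhedralSet (UnionL L) := by
  refine ⟨L.length, fun i => L.get i, fun i => h _ (L.get_mem i), ?_⟩
  ext z
  simp only [UnionL, Set.mem_setOf_eq, Set.mem_iUnion]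
  constructor
  · intro ⟨S, hS, hz⟩
    obtain ⟨i, hi, rfl⟩ := List.mem_iff_get.mp hS
    exact ⟨_, hz⟩
  · intro ⟨i, hz⟩; exact ⟨_, L.get_mem i, hz⟩

lemma isBasic_iff_list (B : Set (Fin n → ℤ)) :
    IsBasicPolyhedralSet B ↔
      ∃ L : List (Set (Fin n → ℤ)), (∀ S ∈ L, IsElementarySet S) ∧ B = InterL L := by
  constructor
  · rintro ⟨k, E, hE, rfl⟩
    refine ⟨List.ofFn E, ?_, ?_⟩
    · intro S hS; obtain ⟨i, rfl⟩ := List.mem_ofFn.mp hS; exact hE i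
    · ext z
      simp only [InterL, Set.mem_setOf_eq, Set.mem_iInter]
      constructor
      · intro hz S hS; obtain ⟨i, rfl⟩ := List.mem_ofFn.mp hS; exact hz i
      · intro hz i; exact hz _ (List.mem_ofFn.mpr ⟨i, rfl⟩)
  · rintro ⟨L, hL, rfl⟩; exact isBasic_interL L hL

lemma isPoly_iff_list (P : Set (Fin n → ℤ)) :
    IsPolyhedralSet P ↔
      ∃ L : List (Set (Fin n → ℤ)), (∀ S ∈ L, IsBasicPolyhedralSet S) ∧ P = UnionL L := by
  constructor
  · rintro ⟨k, B, hB, rfl⟩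
    refine ⟨List.ofFn B, ?_, ?_⟩
    · intro S hS; obtain ⟨i, rfl⟩ := List.mem_ofFn.mp hS; exact hB i
    · ext z
      simp only [UnionL, Set.mem_setOf_eq, Set.mem_iUnion]
      constructor
      · intro ⟨i, hz⟩; exact ⟨_, List.mem_ofFn.mpr ⟨i, rfl⟩, hz⟩
      · intro ⟨S, hS, hz⟩; obtain ⟨i, rfl⟩ := List.mem_ofFn.mp hS; exact ⟨i, hz⟩
  · rintro ⟨L, hL, rfl⟩; exact isPoly_unionL L hL

lemma isPoly_of_basic {B : Set (Fin n → ℤ)} (h : IsBasicPolyhedralSet B) :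
    IsPolyhedralSet B := by
  refine ⟨1, fun _ => B, fun _ => h, by ext z; simp⟩

/-- finite indexed union of polyhedral sets is polyhedral -/
lemma isPoly_iUnion {k : ℕ} (Q : Fin k → Set (Fin n → ℤ)) (h : ∀ i, IsPolyhedralSet (Q i)) :
    IsPolyhedralSet (⋃ i, Q i) := by
  choose L hL hQ using fun i => (isPoly_iff_list (Q i)).mp (h i)
  rw [isPoly_iff_list]
  refine ⟨(List.ofFn L).flatten, ?_, ?_⟩
  · intro S hS
    obtain ⟨l, hl, hSl⟩ := List.mem_flatten.mp hS
    obtain ⟨i, rfl⟩ := List.mem_ofFn.mp hl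
    exact hL i S hSl
  · ext z
    simp only [Set.mem_iUnion, UnionL, Set.mem_setOf_eq]
    constructor
    · intro ⟨i, hz⟩
      rw [hQ i] at hz
      obtain ⟨S, hS, hz⟩ := hz
      exact ⟨S, List.mem_flatten.mpr ⟨L i, List.mem_ofFn.mpr ⟨i, rfl⟩, hS⟩, hz⟩
    · intro ⟨S, hS, hz⟩
      obtain ⟨l, hl, hSl⟩ := List.mem_flatten.mp hS
      obtain ⟨i, rfl⟩ := List.mem_ofFn.mp hl
      exact ⟨i, (hQ i).symm ▸ (⟨S, hSl, hz⟩ : z ∈ UnionL (L i))⟩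

lemma basic_inter_basic {B C : Set (Fin n → ℤ)} (hB : IsBasicPolyhedralSet B)
    (hC : IsBasicPolyhedralSet C) : IsBasicPolyhedralSet (B ∩ C) := by
  obtain ⟨L1, hL1, rfl⟩ := (isBasic_iff_list B).mp hB
  obtain ⟨L2, hL2, rfl⟩ := (isBasic_iff_list C).mp hC
  rw [isBasic_iff_list]
  refine ⟨L1 ++ L2, ?_, ?_⟩
  · intro S hS
    rcases List.mem_append.mp hS with h | h
    · exact hL1 S h
    · exact hL2 S h
  · ext z
    simp only [Set.mem_inter_iff, InterL, Set.mem_setOf_eq, List.mem_append]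
    constructor
    · rintro ⟨h1, h2⟩ S (h | h); exacts [h1 S h, h2 S h]
    · intro h; exact ⟨fun S hS => h S (Or.inl hS), fun S hS => h S (Or.inr hS)⟩

lemma basic_inter_poly {B P : Set (Fin n → ℤ)} (hB : IsBasicPolyhedralSet B)
    (hP : IsPolyhedralSet P) : IsPolyhedralSet (B ∩ P) := by
  obtain ⟨k, Q, hQ, rfl⟩ := hP
  rw [Set.inter_iUnion]
  exact isPoly_iUnion _ fun i => isPoly_of_basic (basic_inter_basic hB (hQ i))


/-- affine form: `dot u z + c` -/
structure LinF (n : ℕ) where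
  u : Fin n → ℤ
  c : ℤ

def LinF.eval (f : LinF n) (z : Fin n → ℤ) : ℤ := dot f.u z + f.c

/-- congruence constraint: `y ≡ dot u z + c [ZMOD b]` -/
structure CongC (n : ℕ) where
  u : Fin n → ℤ
  c : ℤ
  b : ℤ

/-- The normalized one-variable system. -/
def Sat (Es Ls Us : List (LinF n)) (Cs : List (CongC n)) (z : Fin n → ℤ) (y : ℤ) : Prop :=
  (∀ f ∈ Es, y = f.eval z) ∧ (∀ f ∈ Ls, f.eval z < y) ∧ (∀ f ∈ Us, y < f.eval z) ∧
  (∀ c ∈ Cs, y ≡ dot c.u z + c.c [ZMOD c.b])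

lemma modEq_shift {a b t s : ℤ} (h : a - b = t - s) : (a ≡ b [ZMOD m']) ↔ (t ≡ s [ZMOD m']) := by
  rw [Int.modEq_iff_dvd, Int.modEq_iff_dvd]
  have hba : b - a = s - t := by omega
  rw [hba]

lemma basic_sat_at (Es Ls Us : List (LinF n)) (Cs : List (CongC n))
    (hC : ∀ c ∈ Cs, 0 < c.b) (w : Fin n → ℤ) (e : ℤ) :
    IsBasicPolyhedralSet {z | Sat Es Ls Us Cs z (dot w z + e)} := by
  rw [isBasic_iff_list]
  refine ⟨Es.map (fun f => {z | dot (w - f.u) z = f.c - e}) ++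
          Ls.map (fun f => {z | dot (w - f.u) z > f.c - e}) ++
          Us.map (fun f => {z | dot (f.u - w) z > e - f.c}) ++
          Cs.map (fun c => {z | dot (w - c.u) z ≡ c.c - e [ZMOD c.b]}), ?_, ?_⟩
  · intro S hS
    simp only [List.mem_append, List.mem_map] at hS
    rcases hS with ((⟨f, _, rfl⟩ | ⟨f, _, rfl⟩) | ⟨f, _, rfl⟩) | ⟨c, hc, rfl⟩
    · exact elem_eq _ _
    · exact elem_gt _ _
    · exact elem_gt _ _
    · exact elem_mod _ _ _ (hC c hc)
  · ext z
    simp only [Set.mem_setOf_eq, Sat, InterL, List.mem_append, List.mem_map]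
    constructor
    · rintro ⟨h1, h2, h3, h4⟩ S hS
      rcases hS with ((⟨f, hf, rfl⟩ | ⟨f, hf, rfl⟩) | ⟨f, hf, rfl⟩) | ⟨c, hc, rfl⟩
      · have := h1 f hf; simp only [LinF.eval] at this
        simp only [Set.mem_setOf_eq, dot_sub]; omega
      · have := h2 f hf; simp only [LinF.eval] at this
        simp only [Set.mem_setOf_eq, dot_sub]; omega
      · have := h3 f hf; simp only [LinF.eval] at this
        simp only [Set.mem_setOf_eq, dot_sub]; omega
      · have := h4 c hc
        simp only [Set.mem_setOf_eq, dot_sub]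
        exact (modEq_shift (by ring)).mp this
    · intro h
      refine ⟨?_, ?_, ?_, ?_⟩
      · intro f hf
        have := h _ (Or.inl (Or.inl (Or.inl ⟨f, hf, rfl⟩)))
        simp only [Set.mem_setOf_eq, dot_sub] at this
        simp only [LinF.eval]; omega
      · intro f hf
        have := h _ (Or.inl (Or.inl (Or.inr ⟨f, hf, rfl⟩)))
        simp only [Set.mem_setOf_eq, dot_sub] at this
        simp only [LinF.eval]; omega
      · intro f hf
        have := h _ (Or.inl (Or.inr ⟨f, hf, rfl⟩))
        simp only [Set.mem_setOf_eq, dot_sub] at this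
        simp only [LinF.eval]; omega
      · intro c hc
        have := h _ (Or.inr ⟨c, hc, rfl⟩)
        simp only [Set.mem_setOf_eq, dot_sub] at this
        exact (modEq_shift (by ring)).mpr this

lemma exists_max {α : Type*} (f : α → ℤ) (l : List α) (h : l ≠ []) :
    ∃ a ∈ l, ∀ b ∈ l, f b ≤ f a := by
  induction l with
  | nil => exact absurd rfl h
  | cons x xs ih =>
    rcases eq_or_ne xs [] with rfl | hxs
    · exact ⟨x, List.mem_cons_self, by simp⟩
    · obtain ⟨a, ha, hmax⟩ := ih hxs
      rcases le_total (f a) (f x) with hle | hle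
      · refine ⟨x, List.mem_cons_self, ?_⟩
        intro b hb
        rcases List.mem_cons.mp hb with rfl | hb
        · exact le_refl _
        · exact (hmax b hb).trans hle
      · refine ⟨a, List.mem_cons_of_mem _ ha, ?_⟩
        intro b hb
        rcases List.mem_cons.mp hb with rfl | hb
        · exact hle
        · exact hmax b hb


lemma emod_le_self {a M : ℤ} (ha : 0 ≤ a) (hM : 0 < M) : a % M ≤ a := by
  rcases lt_or_ge a M with h | h
  · rw [Int.emod_eq_of_lt ha h]
  · exact le_trans (le_of_lt (Int.emod_lt_of_pos a hM)) h

lemma self_modEq_emod (a M : ℤ) : a % M ≡ a [ZMOD M] := Int.emod_emod_of_dvd a dvd_rfl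

lemma poly_exists_sat (Es Ls Us : List (LinF n)) (Cs : List (CongC n))
    (hC : ∀ c ∈ Cs, 0 < c.b) :
    IsPolyhedralSet {z | ∃ y, Sat Es Ls Us Cs z y} := by
  set M : ℤ := (Cs.map (fun c => c.b)).prod with hMdef
  have hMpos : 0 < M := by
    apply List.prod_pos
    intro a ha
    obtain ⟨c, hc, rfl⟩ := List.mem_map.mp ha
    exact hC c hc
  have hdvd : ∀ c ∈ Cs, c.b ∣ M := fun c hc => List.dvd_prod (List.mem_map_of_mem hc)
  have htrans : ∀ (z : Fin n → ℤ) (y y' : ℤ), y' ≡ y [ZMOD M] →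
      (∀ c ∈ Cs, y ≡ dot c.u z + c.c [ZMOD c.b]) →
      (∀ c ∈ Cs, y' ≡ dot c.u z + c.c [ZMOD c.b]) := by
    intro z y y' hyy' h c hc
    exact (hyy'.of_dvd (hdvd c hc)).trans (h c hc)
  rcases Es with _ | ⟨f, Es'⟩
  swap
  · -- an equation: substitute
    have hset : {z | ∃ y, Sat (f :: Es') Ls Us Cs z y} =
        {z | Sat (f :: Es') Ls Us Cs z (dot f.u z + f.c)} := by
      ext z
      constructor
      · rintro ⟨y, hy⟩
        have hyval : y = f.eval z := hy.1 f (List.mem_cons_self)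
        show Sat (f :: Es') Ls Us Cs z (f.eval z)
        exact hyval ▸ hy
      · intro h; exact ⟨_, h⟩
    rw [hset]
    exact isPoly_of_basic (basic_sat_at _ _ _ _ hC f.u f.c)
  rcases Ls with _ | ⟨g, Ls'⟩
  swap
  · -- lower bounds exist
    set Ls := g :: Ls' with hLs
    have hset : {z | ∃ y, Sat [] Ls Us Cs z y} =
        UnionL (Ls.flatMap fun f => (List.range M.toNat).map
          fun d : ℕ => {z | Sat [] Ls Us Cs z (dot f.u z + (f.c + ((d : ℤ) + 1)))}) := by
      ext z
      constructor
      · rintro ⟨y₀, h1, h2, h3, h4⟩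
        obtain ⟨fm, hfm, hmax⟩ := exists_max (fun f => f.eval z) Ls (by simp [hLs])
        set Lst := fm.eval z with hLst
        have hyL : Lst < y₀ := h2 fm hfm
        set d' := (y₀ - Lst - 1) % M with hd'
        have hd0 : 0 ≤ d' := Int.emod_nonneg _ (ne_of_gt hMpos)
        have hdM : d' < M := Int.emod_lt_of_pos _ hMpos
        have hdle : d' ≤ y₀ - Lst - 1 := emod_le_self (by omega) hMpos
        set y := Lst + (d' + 1) with hy
        have hmody : y ≡ y₀ [ZMOD M] := by
          rw [Int.modEq_iff_dvd]
          refine ⟨(y₀ - Lst - 1) / M, ?_⟩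
          have := Int.emod_def (y₀ - Lst - 1) M
          omega
        have hsat : Sat [] Ls Us Cs z y := by
          refine ⟨by simp, ?_, ?_, htrans z y₀ y hmody h4⟩
          · intro f hf
            have h5 : f.eval z ≤ fm.eval z := hmax f hf
            omega
          · intro f hf
            have h5 : y₀ < f.eval z := h3 f hf
            omega
        have hmem : d'.toNat < M.toNat := by omega
        refine ⟨{z' | Sat [] Ls Us Cs z'
          (dot fm.u z' + (fm.c + ((d'.toNat : ℤ) + 1)))}, ?_, ?_⟩
        · simp only [List.mem_flatMap, List.mem_map, List.mem_range]
          exact ⟨fm, hfm, d'.toNat, hmem, rfl⟩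
        · show Sat [] Ls Us Cs z (dot fm.u z + (fm.c + ((d'.toNat : ℤ) + 1)))
          have hval : dot fm.u z + (fm.c + ((d'.toNat : ℤ) + 1)) = y := by
            have h6 : (d'.toNat : ℤ) = d' := Int.toNat_of_nonneg hd0
            rw [h6, hy, hLst]; simp only [LinF.eval]; ring
          rw [hval]; exact hsat
      · rintro ⟨S, hS, hz⟩
        obtain ⟨f, hf, hS2⟩ := List.mem_flatMap.mp hS
        obtain ⟨d, hd, rfl⟩ := List.mem_map.mp hS2
        exact ⟨_, hz⟩
    rw [hset]
    apply isPoly_unionL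
    intro S hS
    obtain ⟨f, hf, hS2⟩ := List.mem_flatMap.mp hS
    obtain ⟨d, hd, rfl⟩ := List.mem_map.mp hS2
    exact basic_sat_at _ _ _ _ hC f.u (f.c + ((d : ℤ) + 1))
  rcases Us with _ | ⟨g, Us'⟩
  swap
  · -- upper bounds exist, no lower bounds
    set Us := g :: Us' with hUs
    have hset : {z | ∃ y, Sat [] [] Us Cs z y} =
        UnionL (Us.flatMap fun f => (List.range M.toNat).map
          fun d : ℕ => {z | Sat [] [] Us Cs z (dot f.u z + (f.c - ((d : ℤ) + 1)))}) := by
      ext z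
      constructor
      · rintro ⟨y₀, h1, h2, h3, h4⟩
        obtain ⟨fm, hfm, hmax⟩ := exists_max (fun f => -(f.eval z)) Us (by simp [hUs])
        set Ust := fm.eval z with hUst
        have hyU : y₀ < Ust := h3 fm hfm
        set d' := (Ust - y₀ - 1) % M with hd'
        have hd0 : 0 ≤ d' := Int.emod_nonneg _ (ne_of_gt hMpos)
        have hdM : d' < M := Int.emod_lt_of_pos _ hMpos
        have hdle : d' ≤ Ust - y₀ - 1 := emod_le_self (by omega) hMpos
        set y := Ust - (d' + 1) with hy
        have hmody : y ≡ y₀ [ZMOD M] := by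
          rw [Int.modEq_iff_dvd]
          refine ⟨-((Ust - y₀ - 1) / M), ?_⟩
          have := Int.emod_def (Ust - y₀ - 1) M
          have hh : M * -((Ust - y₀ - 1) / M) = -(M * ((Ust - y₀ - 1) / M)) := by ring
          omega
        have hsat : Sat [] [] Us Cs z y := by
          refine ⟨by simp, by simp, ?_, htrans z y₀ y hmody h4⟩
          intro f hf
          have h5 : -(f.eval z) ≤ -(fm.eval z) := hmax f hf
          omega
        have hmem : d'.toNat < M.toNat := by omega
        refine ⟨{z' | Sat [] [] Us Cs z'
          (dot fm.u z' + (fm.c - ((d'.toNat : ℤ) + 1)))}, ?_, ?_⟩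
        · simp only [List.mem_flatMap, List.mem_map, List.mem_range]
          exact ⟨fm, hfm, d'.toNat, hmem, rfl⟩
        · show Sat [] [] Us Cs z (dot fm.u z + (fm.c - ((d'.toNat : ℤ) + 1)))
          have hval : dot fm.u z + (fm.c - ((d'.toNat : ℤ) + 1)) = y := by
            have h6 : (d'.toNat : ℤ) = d' := Int.toNat_of_nonneg hd0
            rw [h6, hy, hUst]; simp only [LinF.eval]; ring
          rw [hval]; exact hsat
      · rintro ⟨S, hS, hz⟩
        obtain ⟨f, hf, hS2⟩ := List.mem_flatMap.mp hS
        obtain ⟨d, hd, rfl⟩ := List.mem_map.mp hS2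
        exact ⟨_, hz⟩
    rw [hset]
    apply isPoly_unionL
    intro S hS
    obtain ⟨f, hf, hS2⟩ := List.mem_flatMap.mp hS
    obtain ⟨d, hd, rfl⟩ := List.mem_map.mp hS2
    exact basic_sat_at _ _ _ _ hC f.u (f.c - ((d : ℤ) + 1))
  · -- only congruences
    have hset : {z | ∃ y, Sat [] [] [] Cs z y} =
        UnionL ((List.range M.toNat).map
          fun d : ℕ => {z | Sat [] [] [] Cs z (dot (0 : Fin n → ℤ) z + (d : ℤ))}) := by
      ext z
      constructor
      · rintro ⟨y₀, h1, h2, h3, h4⟩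
        set y := y₀ % M with hy
        have hd0 : 0 ≤ y := Int.emod_nonneg _ (ne_of_gt hMpos)
        have hdM : y < M := Int.emod_lt_of_pos _ hMpos
        have hmody : y ≡ y₀ [ZMOD M] := self_modEq_emod y₀ M
        have hmem : y.toNat < M.toNat := by omega
        refine ⟨{z' | Sat [] [] [] Cs z' (dot (0 : Fin n → ℤ) z' + ((y.toNat : ℤ)))}, ?_, ?_⟩
        · simp only [List.mem_map, List.mem_range]
          exact ⟨y.toNat, hmem, rfl⟩
        · show Sat [] [] [] Cs z (dot (0 : Fin n → ℤ) z + (y.toNat : ℤ))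
          have hval : dot (0 : Fin n → ℤ) z + (y.toNat : ℤ) = y := by
            rw [dot_zero, Int.toNat_of_nonneg hd0]; ring
          rw [hval]
          exact ⟨by simp, by simp, by simp, htrans z y₀ y hmody h4⟩
      · rintro ⟨S, hS, hz⟩
        obtain ⟨d, hd, rfl⟩ := List.mem_map.mp hS
        exact ⟨_, hz⟩
    rw [hset]
    apply isPoly_unionL
    intro S hS
    obtain ⟨d, hd, rfl⟩ := List.mem_map.mp hS
    exact basic_sat_at _ _ _ _ hC 0 (d : ℤ)


lemma modEq_shift_neg {m' a b t s : ℤ} (h : a - b = s - t) :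
    (a ≡ b [ZMOD m']) ↔ (t ≡ s [ZMOD m']) := by
  have h2 := modEq_shift (m' := m') (a := b) (b := a) (t := t) (s := s) (by omega)
  exact ⟨fun h' => h2.mp h'.symm, fun h' => (h2.mpr h').symm⟩

lemma scale_mod {k X c b : ℤ} (hk : 0 < k) :
    (X ≡ c [ZMOD b]) ↔ (k * X ≡ k * c [ZMOD k * b]) := by
  rw [Int.modEq_iff_dvd, Int.modEq_iff_dvd]
  have h : k * c - k * X = k * (c - X) := by ring
  rw [h]
  exact (mul_dvd_mul_iff_left (ne_of_gt hk)).symm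

lemma k_pos {k a δ : ℤ} (ha : 0 < a) (hδ : 0 < δ) (hka : k * a = δ) : 0 < k := by nlinarith

lemma key_eq {a k e x D c : ℤ} (hk : 0 < k) (hka : k * a = e) :
    (a * x + D = c) ↔ (e * x = -(k * D) + k * c) := by
  constructor
  · intro h; linear_combination k * h - x * hka
  · intro h
    have h3 : k * (a * x + D) = k * c := by linear_combination h + x * hka
    exact mul_left_cancel₀ (ne_of_gt hk) h3

lemma key_gt {a k e x D c : ℤ} (hk : 0 < k) (hka : k * a = e) :
    (c < a * x + D) ↔ (-(k * D) + k * c < e * x) := by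
  rw [← mul_lt_mul_iff_right₀ hk]
  have hrw : k * (a * x + D) = e * x + k * D := by linear_combination x * hka
  rw [hrw]
  constructor <;> intro h <;> linarith

lemma key_mod {a k e x D c b : ℤ} (hk : 0 < k) (hka : k * a = e) :
    (a * x + D ≡ c [ZMOD b]) ↔ (e * x ≡ -(k * D) + k * c [ZMOD k * b]) := by
  rw [scale_mod hk]
  exact modEq_shift (by linear_combination x * hka)

/-- syntax for an elementary condition on `(z, x)` -/
inductive Atom (n : ℕ) where
  | eq (a : ℤ) (u : Fin n → ℤ) (c : ℤ)
  | gt (a : ℤ) (u : Fin n → ℤ) (c : ℤ)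
  | md (a : ℤ) (u : Fin n → ℤ) (c : ℤ) (b : ℤ)

namespace Atom

def Holds : Atom n → (Fin n → ℤ) → ℤ → Prop
  | eq a u c, z, x => a * x + dot u z = c
  | gt a u c, z, x => c < a * x + dot u z
  | md a u c b, z, x => a * x + dot u z ≡ c [ZMOD b]

def Valid : Atom n → Prop
  | md _ _ _ b => 0 < b
  | _ => True

def coef : Atom n → ℤ
  | eq a _ _ => a
  | gt a _ _ => a
  | md a _ _ _ => a

def toEq (δ : ℤ) : Atom n → Option (LinF n)
  | eq a u c =>
      if 0 < a then some ⟨(-(δ / a)) • u, (δ / a) * c⟩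
      else if a < 0 then some ⟨(δ / (-a)) • u, -((δ / (-a)) * c)⟩ else none
  | _ => none

def toLow (δ : ℤ) : Atom n → Option (LinF n)
  | gt a u c => if 0 < a then some ⟨(-(δ / a)) • u, (δ / a) * c⟩ else none
  | _ => none

def toUp (δ : ℤ) : Atom n → Option (LinF n)
  | gt a u c => if a < 0 then some ⟨(δ / (-a)) • u, -((δ / (-a)) * c)⟩ else none
  | _ => none

def toCong (δ : ℤ) : Atom n → Option (CongC n)
  | md a u c b =>
      if 0 < a then some ⟨(-(δ / a)) • u, (δ / a) * c, (δ / a) * b⟩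
      else if a < 0 then some ⟨(δ / (-a)) • u, -((δ / (-a)) * c), (δ / (-a)) * b⟩ else none
  | _ => none

def pureSet : Atom n → Set (Fin n → ℤ)
  | eq _ u c => {z | dot u z = c}
  | gt _ u c => {z | dot u z > c}
  | md _ u c b => {z | dot u z ≡ c [ZMOD b]}

def toPure : Atom n → Option (Set (Fin n → ℤ)) :=
  fun A => if A.coef = 0 then some A.pureSet else none

lemma pureSet_elementary (A : Atom n) (hA : A.Valid) : IsElementarySet A.pureSet := by
  cases A with
  | eq a u c => exact elem_eq u c
  | gt a u c => exact elem_gt u c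
  | md a u c b => exact elem_mod u c b hA

lemma holds_iff (A : Atom n) (hA : A.Valid) (δ : ℤ) (hδ : 0 < δ)
    (hdvd : A.coef ≠ 0 → A.coef ∣ δ) (z : Fin n → ℤ) (x : ℤ) :
    A.Holds z x ↔
      ((A.coef = 0 → z ∈ A.pureSet) ∧
       (∀ f ∈ toEq δ A, δ * x = f.eval z) ∧
       (∀ f ∈ toLow δ A, f.eval z < δ * x) ∧
       (∀ f ∈ toUp δ A, δ * x < f.eval z) ∧
       (∀ cc ∈ toCong δ A, δ * x ≡ dot cc.u z + cc.c [ZMOD cc.b])) := by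
  cases A with
  | eq a u c =>
    rcases lt_trichotomy a 0 with hneg | rfl | hpos
    · -- negative
      have hd : -a ∣ δ := (neg_dvd).mpr (hdvd (fun h0 => absurd (show a = 0 from h0) (by omega)))
      have hka : δ / -a * -a = δ := Int.ediv_mul_cancel hd
      have hk : 0 < δ / -a := k_pos (by omega) hδ hka
      have hka' : δ / -a * a = -δ := by linear_combination -hka
      have hmain := key_eq (x := x) (D := dot u z) (c := c) hk hka'
      have hto : toEq δ (Atom.eq a u c) = some ⟨(δ / -a) • u, -(δ / -a * c)⟩ := by simp only [toEq]; rw [if_neg (by omega : ¬ 0 < a), if_pos hneg]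
      have hnLow : toLow δ (Atom.eq a u c) = none := rfl
      have hnUp : toUp δ (Atom.eq a u c) = none := rfl
      have hnCong : toCong δ (Atom.eq a u c) = none := rfl
      constructor
      · intro h
        refine ⟨fun h0 => absurd (show a = 0 from h0) (by omega), ?_, ?_, ?_, ?_⟩
        · intro f hf
          rw [hto, Option.mem_some_iff] at hf
          subst hf
          simp only [LinF.eval, dot_smul]
          have h2 := hmain.mp h
          linarith
        · intro f hf; rw [hnLow] at hf; simp at hf
        · intro f hf; rw [hnUp] at hf; simp at hf
        · intro f hf; rw [hnCong] at hf; simp at hf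
      · rintro ⟨-, hE, hL, hU, hC⟩
        have hv := hE _ (by rw [hto]; exact Option.mem_some_iff.mpr rfl)
        simp only [LinF.eval, dot_smul] at hv
        exact hmain.mpr (by linarith)
    · -- zero
      have hnEq : toEq δ (Atom.eq 0 u c) = none := by simp [toEq]
      have hnLow : toLow δ (Atom.eq 0 u c) = none := by simp [toLow]
      have hnUp : toUp δ (Atom.eq 0 u c) = none := by simp [toUp]
      have hnCong : toCong δ (Atom.eq 0 u c) = none := by simp [toCong]
      constructor
      · intro h
        have h2 : 0 * x + dot u z = c := h
        have h3 : dot u z = c := by linarith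
        refine ⟨fun _ => h3, ?_, ?_, ?_, ?_⟩
        · intro f hf; rw [hnEq] at hf; simp at hf
        · intro f hf; rw [hnLow] at hf; simp at hf
        · intro f hf; rw [hnUp] at hf; simp at hf
        · intro f hf; rw [hnCong] at hf; simp at hf
      · rintro ⟨hp, -⟩
        have h3 : dot u z = c := hp rfl
        show 0 * x + dot u z = c
        linarith
    · -- positive
      have hd : a ∣ δ := hdvd (fun h0 => absurd (show a = 0 from h0) (by omega))
      have hka : δ / a * a = δ := Int.ediv_mul_cancel hd
      have hk : 0 < δ / a := k_pos hpos hδ hka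
      have hmain := key_eq (x := x) (D := dot u z) (c := c) hk hka
      have hto : toEq δ (Atom.eq a u c) = some ⟨(-(δ / a)) • u, δ / a * c⟩ := by simp only [toEq]; rw [if_pos hpos]
      have hnLow : toLow δ (Atom.eq a u c) = none := rfl
      have hnUp : toUp δ (Atom.eq a u c) = none := rfl
      have hnCong : toCong δ (Atom.eq a u c) = none := rfl
      constructor
      · intro h
        refine ⟨fun h0 => absurd (show a = 0 from h0) (by omega), ?_, ?_, ?_, ?_⟩
        · intro f hf
          rw [hto, Option.mem_some_iff] at hf
          subst hf
          simp only [LinF.eval, dot_neg_smul]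
          have h2 := hmain.mp h
          linarith
        · intro f hf; rw [hnLow] at hf; simp at hf
        · intro f hf; rw [hnUp] at hf; simp at hf
        · intro f hf; rw [hnCong] at hf; simp at hf
      · rintro ⟨-, hE, hL, hU, hC⟩
        have hv := hE _ (by rw [hto]; exact Option.mem_some_iff.mpr rfl)
        simp only [LinF.eval, dot_neg_smul] at hv
        exact hmain.mpr (by linarith)
  | gt a u c =>
    rcases lt_trichotomy a 0 with hneg | rfl | hpos
    · -- negative
      have hd : -a ∣ δ := (neg_dvd).mpr (hdvd (fun h0 => absurd (show a = 0 from h0) (by omega)))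
      have hka : δ / -a * -a = δ := Int.ediv_mul_cancel hd
      have hk : 0 < δ / -a := k_pos (by omega) hδ hka
      have hka' : δ / -a * a = -δ := by linear_combination -hka
      have hmain := key_gt (x := x) (D := dot u z) (c := c) hk hka'
      have hto : toUp δ (Atom.gt a u c) = some ⟨(δ / -a) • u, -(δ / -a * c)⟩ := by simp only [toUp]; rw [if_pos hneg]
      have hnEq : toEq δ (Atom.gt a u c) = none := rfl
      have hnLow : toLow δ (Atom.gt a u c) = none := by simp only [toLow]; rw [if_neg (by omega : ¬ 0 < a)]
      have hnCong : toCong δ (Atom.gt a u c) = none := rfl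
      constructor
      · intro h
        refine ⟨fun h0 => absurd (show a = 0 from h0) (by omega), ?_, ?_, ?_, ?_⟩
        · intro f hf; rw [hnEq] at hf; simp at hf
        · intro f hf; rw [hnLow] at hf; simp at hf
        · intro f hf
          rw [hto, Option.mem_some_iff] at hf
          subst hf
          simp only [LinF.eval, dot_smul]
          have h2 := hmain.mp h
          linarith
        · intro f hf; rw [hnCong] at hf; simp at hf
      · rintro ⟨-, hE, hL, hU, hC⟩
        have hv := hU _ (by rw [hto]; exact Option.mem_some_iff.mpr rfl)
        simp only [LinF.eval, dot_smul] at hv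
        exact hmain.mpr (by linarith)
    · -- zero
      have hnEq : toEq δ (Atom.gt 0 u c) = none := by simp [toEq]
      have hnLow : toLow δ (Atom.gt 0 u c) = none := by simp [toLow]
      have hnUp : toUp δ (Atom.gt 0 u c) = none := by simp [toUp]
      have hnCong : toCong δ (Atom.gt 0 u c) = none := by simp [toCong]
      constructor
      · intro h
        have h2 : c < 0 * x + dot u z := h
        have h3 : c < dot u z := by linarith
        refine ⟨fun _ => h3, ?_, ?_, ?_, ?_⟩
        · intro f hf; rw [hnEq] at hf; simp at hf
        · intro f hf; rw [hnLow] at hf; simp at hf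
        · intro f hf; rw [hnUp] at hf; simp at hf
        · intro f hf; rw [hnCong] at hf; simp at hf
      · rintro ⟨hp, -⟩
        have h3 : c < dot u z := hp rfl
        show c < 0 * x + dot u z
        linarith
    · -- positive
      have hd : a ∣ δ := hdvd (fun h0 => absurd (show a = 0 from h0) (by omega))
      have hka : δ / a * a = δ := Int.ediv_mul_cancel hd
      have hk : 0 < δ / a := k_pos hpos hδ hka
      have hmain := key_gt (x := x) (D := dot u z) (c := c) hk hka
      have hto : toLow δ (Atom.gt a u c) = some ⟨(-(δ / a)) • u, δ / a * c⟩ := by simp only [toLow]; rw [if_pos hpos]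
      have hnEq : toEq δ (Atom.gt a u c) = none := rfl
      have hnUp : toUp δ (Atom.gt a u c) = none := by simp only [toUp]; rw [if_neg (by omega : ¬ a < 0)]
      have hnCong : toCong δ (Atom.gt a u c) = none := rfl
      constructor
      · intro h
        refine ⟨fun h0 => absurd (show a = 0 from h0) (by omega), ?_, ?_, ?_, ?_⟩
        · intro f hf; rw [hnEq] at hf; simp at hf
        · intro f hf
          rw [hto, Option.mem_some_iff] at hf
          subst hf
          simp only [LinF.eval, dot_neg_smul]
          have h2 := hmain.mp h
          linarith
        · intro f hf; rw [hnUp] at hf; simp at hf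
        · intro f hf; rw [hnCong] at hf; simp at hf
      · rintro ⟨-, hE, hL, hU, hC⟩
        have hv := hL _ (by rw [hto]; exact Option.mem_some_iff.mpr rfl)
        simp only [LinF.eval, dot_neg_smul] at hv
        exact hmain.mpr (by linarith)
  | md a u c b =>
    rcases lt_trichotomy a 0 with hneg | rfl | hpos
    · -- negative
      have hd : -a ∣ δ := (neg_dvd).mpr (hdvd (fun h0 => absurd (show a = 0 from h0) (by omega)))
      have hka : δ / -a * -a = δ := Int.ediv_mul_cancel hd
      have hk : 0 < δ / -a := k_pos (by omega) hδ hka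
      have hka' : δ / -a * a = -δ := by linear_combination -hka
      have hmain := key_mod (x := x) (D := dot u z) (c := c) (b := b) hk hka'
      have hto : toCong δ (Atom.md a u c b) = some ⟨(δ / -a) • u, -(δ / -a * c), δ / -a * b⟩ := by simp only [toCong]; rw [if_neg (by omega : ¬ 0 < a), if_pos hneg]
      have hnEq : toEq δ (Atom.md a u c b) = none := rfl
      have hnLow : toLow δ (Atom.md a u c b) = none := rfl
      have hnUp : toUp δ (Atom.md a u c b) = none := rfl
      have hflip : (-δ * x ≡ -(δ / -a * dot u z) + δ / -a * c [ZMOD δ / -a * b]) ↔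
          (δ * x ≡ dot ((δ / -a) • u) z + -(δ / -a * c) [ZMOD δ / -a * b]) := by
        rw [dot_smul]
        exact modEq_shift_neg (by ring)
      constructor
      · intro h
        refine ⟨fun h0 => absurd (show a = 0 from h0) (by omega), ?_, ?_, ?_, ?_⟩
        · intro f hf; rw [hnEq] at hf; simp at hf
        · intro f hf; rw [hnLow] at hf; simp at hf
        · intro f hf; rw [hnUp] at hf; simp at hf
        · intro f hf
          rw [hto, Option.mem_some_iff] at hf
          subst hf
          exact hflip.mp (hmain.mp h)
      · rintro ⟨-, hE, hL, hU, hC⟩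
        have hv := hC _ (by rw [hto]; exact Option.mem_some_iff.mpr rfl)
        exact hmain.mpr (hflip.mpr hv)
    · -- zero
      have hnEq : toEq δ (Atom.md 0 u c b) = none := by simp [toEq]
      have hnLow : toLow δ (Atom.md 0 u c b) = none := by simp [toLow]
      have hnUp : toUp δ (Atom.md 0 u c b) = none := by simp [toUp]
      have hnCong : toCong δ (Atom.md 0 u c b) = none := by simp [toCong]
      constructor
      · intro h
        have h2 : 0 * x + dot u z ≡ c [ZMOD b] := h
        have h3 : dot u z ≡ c [ZMOD b] := by simpa using h2
        refine ⟨fun _ => h3, ?_, ?_, ?_, ?_⟩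
        · intro f hf; rw [hnEq] at hf; simp at hf
        · intro f hf; rw [hnLow] at hf; simp at hf
        · intro f hf; rw [hnUp] at hf; simp at hf
        · intro f hf; rw [hnCong] at hf; simp at hf
      · rintro ⟨hp, -⟩
        have h3 : dot u z ≡ c [ZMOD b] := hp rfl
        show 0 * x + dot u z ≡ c [ZMOD b]
        simpa using h3
    · -- positive
      have hd : a ∣ δ := hdvd (fun h0 => absurd (show a = 0 from h0) (by omega))
      have hka : δ / a * a = δ := Int.ediv_mul_cancel hd
      have hk : 0 < δ / a := k_pos hpos hδ hka
      have hmain := key_mod (x := x) (D := dot u z) (c := c) (b := b) hk hka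
      have hto : toCong δ (Atom.md a u c b) = some ⟨(-(δ / a)) • u, δ / a * c, δ / a * b⟩ := by simp only [toCong]; rw [if_pos hpos]
      have hnEq : toEq δ (Atom.md a u c b) = none := rfl
      have hnLow : toLow δ (Atom.md a u c b) = none := rfl
      have hnUp : toUp δ (Atom.md a u c b) = none := rfl
      have hflip : (δ * x ≡ -(δ / a * dot u z) + δ / a * c [ZMOD δ / a * b]) ↔
          (δ * x ≡ dot ((-(δ / a)) • u) z + δ / a * c [ZMOD δ / a * b]) := by
        rw [dot_neg_smul]
      constructor
      · intro h
        refine ⟨fun h0 => absurd (show a = 0 from h0) (by omega), ?_, ?_, ?_, ?_⟩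
        · intro f hf; rw [hnEq] at hf; simp at hf
        · intro f hf; rw [hnLow] at hf; simp at hf
        · intro f hf; rw [hnUp] at hf; simp at hf
        · intro f hf
          rw [hto, Option.mem_some_iff] at hf
          subst hf
          exact hflip.mp (hmain.mp h)
      · rintro ⟨-, hE, hL, hU, hC⟩
        have hv := hC _ (by rw [hto]; exact Option.mem_some_iff.mpr rfl)
        exact hmain.mpr (hflip.mpr hv)

end Atom


open Atom in
lemma poly_exists_atoms (As : List (Atom n)) (hA : ∀ A ∈ As, A.Valid) :
    IsPolyhedralSet {z | ∃ x, ∀ A ∈ As, A.Holds z x} := by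
  classical
  set δ := (As.map (fun A => if A.coef = 0 then 1 else |A.coef|)).prod with hδdef
  have hδpos : 0 < δ := by
    apply List.prod_pos
    intro a ha
    obtain ⟨A, hA', rfl⟩ := List.mem_map.mp ha
    split
    · norm_num
    · next h => exact abs_pos.mpr h
  have hdvd : ∀ A ∈ As, A.coef ≠ 0 → A.coef ∣ δ := by
    intro A hAmem h
    have h1 : (if A.coef = 0 then 1 else |A.coef|) ∣ δ :=
      List.dvd_prod (List.mem_map_of_mem hAmem)
    rw [if_neg h] at h1
    exact (abs_dvd _ _).mp h1
  set Es := As.filterMap (toEq δ) with hEs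
  set Ls := As.filterMap (toLow δ) with hLs
  set Us := As.filterMap (toUp δ) with hUs
  set Cs := (⟨0, 0, δ⟩ : CongC n) :: As.filterMap (toCong δ) with hCs
  have hCpos : ∀ c ∈ Cs, 0 < c.b := by
    intro c hc
    rcases List.mem_cons.mp hc with rfl | hc
    · exact hδpos
    · obtain ⟨A, hAmem, hcA⟩ := List.mem_filterMap.mp hc
      cases A with
      | eq a u c' => simp [toCong] at hcA
      | gt a u c' => simp [toCong] at hcA
      | md a u c' b =>
        have hb : 0 < b := hA _ hAmem
        rcases lt_trichotomy a 0 with hneg | h0 | hpos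
        · have hd : -a ∣ δ := (neg_dvd).mpr (hdvd _ hAmem (fun h => absurd (show a = 0 from h) (by omega)))
          have hka : δ / -a * -a = δ := Int.ediv_mul_cancel hd
          have hk : 0 < δ / -a := k_pos (by omega) hδpos hka
          simp only [toCong, if_neg (by omega : ¬ (0:ℤ) < a), if_pos hneg,
            Option.some.injEq] at hcA
          rw [← hcA]
          exact mul_pos hk hb
        · subst h0
          simp [toCong] at hcA
        · have hd : a ∣ δ := hdvd _ hAmem (fun h => absurd (show a = 0 from h) (by omega))
          have hka : δ / a * a = δ := Int.ediv_mul_cancel hd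
          have hk : 0 < δ / a := k_pos hpos hδpos hka
          simp only [toCong, if_pos hpos, Option.some.injEq] at hcA
          rw [← hcA]
          exact mul_pos hk hb
  have key : {z | ∃ x, ∀ A ∈ As, A.Holds z x} =
      InterL (As.filterMap toPure) ∩ {z | ∃ y, Sat Es Ls Us Cs z y} := by
    ext z
    constructor
    · rintro ⟨x, hall⟩
      have hiff := fun A (hm : A ∈ As) =>
        (holds_iff A (hA A hm) δ hδpos (hdvd A hm) z x).mp (hall A hm)
      constructor
      · intro S hS
        obtain ⟨A, hAmem, hPA⟩ := List.mem_filterMap.mp hS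
        unfold toPure at hPA
        split at hPA
        · next h0 =>
          cases hPA
          exact (hiff A hAmem).1 h0
        · exact absurd hPA (by simp)
      · refine ⟨δ * x, ?_, ?_, ?_, ?_⟩
        · intro f hf
          obtain ⟨A, hAmem, hfA⟩ := List.mem_filterMap.mp hf
          exact (hiff A hAmem).2.1 f (Option.mem_def.mpr hfA)
        · intro f hf
          obtain ⟨A, hAmem, hfA⟩ := List.mem_filterMap.mp hf
          exact (hiff A hAmem).2.2.1 f (Option.mem_def.mpr hfA)
        · intro f hf
          obtain ⟨A, hAmem, hfA⟩ := List.mem_filterMap.mp hf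
          exact (hiff A hAmem).2.2.2.1 f (Option.mem_def.mpr hfA)
        · intro cc hcc
          rcases List.mem_cons.mp hcc with rfl | hcc
          · show δ * x ≡ dot 0 z + 0 [ZMOD δ]
            rw [dot_zero, add_zero]
            exact (Int.modEq_zero_iff_dvd).mpr ⟨x, rfl⟩
          · obtain ⟨A, hAmem, hcA⟩ := List.mem_filterMap.mp hcc
            exact (hiff A hAmem).2.2.2.2 cc (Option.mem_def.mpr hcA)
    · rintro ⟨hpure, y, hE, hL, hU, hC⟩
      have hdy : δ ∣ y := by
        have h0 := hC _ (List.mem_cons_self)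
        rw [show ((⟨0, 0, δ⟩ : CongC n)).u = 0 from rfl] at h0
        simpa [dot_zero] using (Int.modEq_zero_iff_dvd).mp (by simpa [dot_zero] using h0)
      obtain ⟨x, rfl⟩ := hdy
      refine ⟨x, ?_⟩
      intro A hAmem
      refine (holds_iff A (hA A hAmem) δ hδpos (hdvd A hAmem) z x).mpr
        ⟨?_, ?_, ?_, ?_, ?_⟩
      · intro h0
        have hmem : A.pureSet ∈ As.filterMap toPure :=
          List.mem_filterMap.mpr ⟨A, hAmem, by unfold toPure; rw [if_pos h0]⟩
        exact hpure _ hmem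
      · intro f hf
        exact hE f (List.mem_filterMap.mpr ⟨A, hAmem, Option.mem_def.mp hf⟩)
      · intro f hf
        exact hL f (List.mem_filterMap.mpr ⟨A, hAmem, Option.mem_def.mp hf⟩)
      · intro f hf
        exact hU f (List.mem_filterMap.mpr ⟨A, hAmem, Option.mem_def.mp hf⟩)
      · intro cc hcc
        exact hC cc (List.mem_cons_of_mem _
          (List.mem_filterMap.mpr ⟨A, hAmem, Option.mem_def.mp hcc⟩))
  rw [key]
  apply basic_inter_poly
  · apply isBasic_interL
    intro S hS
    obtain ⟨A, hAmem, hPA⟩ := List.mem_filterMap.mp hS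
    unfold toPure at hPA
    split at hPA
    · cases hPA
      exact pureSet_elementary A (hA A hAmem)
    · exact absurd hPA (by simp)
  · exact poly_exists_sat Es Ls Us Cs hCpos


lemma snoc_sum (u : Fin (n + 1) → ℤ) (z : Fin n → ℤ) (x : ℤ) :
    (∑ i, u i * (Fin.snoc z x : Fin (n + 1) → ℤ) i) =
      u (Fin.last n) * x + dot (fun i => u i.castSucc) z := by
  rw [Fin.sum_univ_castSucc]
  simp only [Fin.snoc_castSucc, Fin.snoc_last, dot]
  ring

lemma elem_toAtom {E : Set (Fin (n + 1) → ℤ)} (h : IsElementarySet E) :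
    ∃ A : Atom n, A.Valid ∧ ∀ z x, (Fin.snoc z x ∈ E ↔ A.Holds z x) := by
  rcases h with ⟨u, a, rfl⟩ | ⟨u, a, rfl⟩ | ⟨u, a, b, hb, rfl⟩
  · refine ⟨Atom.eq (u (Fin.last n)) (fun i => u i.castSucc) a, trivial, ?_⟩
    intro z x
    simp only [Set.mem_setOf_eq]
    rw [snoc_sum u z x]
    exact Iff.rfl
  · refine ⟨Atom.gt (u (Fin.last n)) (fun i => u i.castSucc) a, trivial, ?_⟩
    intro z x
    simp only [Set.mem_setOf_eq]
    rw [snoc_sum u z x]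
    exact Iff.rfl
  · refine ⟨Atom.md (u (Fin.last n)) (fun i => u i.castSucc) a b, hb, ?_⟩
    intro z x
    simp only [Set.mem_setOf_eq]
    rw [snoc_sum u z x]
    exact Iff.rfl

lemma poly_proj (P : Set (Fin (n + 1) → ℤ)) (h : IsPolyhedralSet P) :
    IsPolyhedralSet {z : Fin n → ℤ | ∃ x, Fin.snoc z x ∈ P} := by
  obtain ⟨k, B, hB, rfl⟩ := h
  have hsplit : {z : Fin n → ℤ | ∃ x, Fin.snoc z x ∈ ⋃ i, B i} =
      ⋃ i, {z | ∃ x, Fin.snoc z x ∈ B i} := by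
    ext z
    simp only [Set.mem_setOf_eq, Set.mem_iUnion]
    constructor
    · rintro ⟨x, i, hx⟩; exact ⟨i, x, hx⟩
    · rintro ⟨i, x, hx⟩; exact ⟨x, i, hx⟩
  rw [hsplit]
  apply isPoly_iUnion
  intro i
  obtain ⟨kk, Ee, hEe, hBi⟩ := hB i
  choose At hv hAt using fun j => elem_toAtom (hEe j)
  have hset : {z : Fin n → ℤ | ∃ x, Fin.snoc z x ∈ B i} =
      {z | ∃ x, ∀ A ∈ List.ofFn At, A.Holds z x} := by
    ext z
    constructor
    · rintro ⟨x, hx⟩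
      refine ⟨x, ?_⟩
      intro A hA2
      obtain ⟨j, rfl⟩ := List.mem_ofFn.mp hA2
      refine (hAt j z x).mp ?_
      rw [hBi] at hx
      exact Set.mem_iInter.mp hx j
    · rintro ⟨x, hx⟩
      refine ⟨x, ?_⟩
      rw [hBi]
      exact Set.mem_iInter.mpr fun j =>
        (hAt j z x).mpr (hx _ (List.mem_ofFn.mpr ⟨j, rfl⟩))
  rw [hset]
  apply poly_exists_atoms
  intro A hA2
  obtain ⟨j, rfl⟩ := List.mem_ofFn.mp hA2
  exact hv j

lemma poly_proj_many : ∀ (k : ℕ) {n : ℕ} (P : Set (Fin (n + k) → ℤ)), IsPolyhedralSet P →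
    IsPolyhedralSet {z : Fin n → ℤ | ∃ x : Fin k → ℤ, Fin.append z x ∈ P} := by
  intro k
  induction k with
  | zero =>
    intro n P hP
    have happ : ∀ z : Fin n → ℤ, Fin.append z Fin.elim0 = z := by
      intro z
      rw [Fin.append_elim0]
      rfl
    have hset : {z : Fin n → ℤ | ∃ x : Fin 0 → ℤ, Fin.append z x ∈ P} = P := by
      ext z
      constructor
      · rintro ⟨x, hx⟩
        have hx0 : x = Fin.elim0 := Subsingleton.elim _ _
        rw [hx0, happ] at hx
        exact hx
      · intro hz
        exact ⟨Fin.elim0, by rw [happ]; exact hz⟩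
    rw [hset]
    exact hP
  | succ k ih =>
    intro n P hP
    have hQ : IsPolyhedralSet {w : Fin (n + k) → ℤ | ∃ t, Fin.snoc w t ∈ P} :=
      poly_proj P hP
    have hset : {z : Fin n → ℤ | ∃ x : Fin (k + 1) → ℤ, Fin.append z x ∈ P} =
        {z : Fin n → ℤ | ∃ x : Fin k → ℤ,
          Fin.append z x ∈ {w : Fin (n + k) → ℤ | ∃ t, Fin.snoc w t ∈ P}} := by
      ext z
      constructor
      · rintro ⟨x, hx⟩
        refine ⟨Fin.init x, x (Fin.last k), ?_⟩
        rw [← Fin.append_snoc, Fin.snoc_init_self]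
        exact hx
      · rintro ⟨x, t, hx⟩
        refine ⟨Fin.snoc x t, ?_⟩
        rw [Fin.append_snoc]
        exact hx
    rw [hset]
    exact ih _ hQ

lemma poly_preimage_natAdd (m' : ℕ) (P : Set (Fin m → ℤ)) (h : IsPolyhedralSet P) :
    IsPolyhedralSet ((fun w : Fin (m' + m) → ℤ => fun i => w (Fin.natAdd m' i)) ⁻¹' P) := by
  have hdot : ∀ (u : Fin m → ℤ) (w : Fin (m' + m) → ℤ),
      dot (Fin.append (0 : Fin m' → ℤ) u) w = ∑ i, u i * w (Fin.natAdd m' i) := by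
    intro u w
    rw [dot, Fin.sum_univ_add]
    simp [Fin.append_left, Fin.append_right]
  obtain ⟨k, B, hB, rfl⟩ := h
  rw [Set.preimage_iUnion]
  apply isPoly_iUnion
  intro i
  apply isPoly_of_basic
  obtain ⟨kk, Ee, hEe, hBi⟩ := hB i
  rw [hBi, Set.preimage_iInter]
  refine ⟨kk, _, fun j => ?_, rfl⟩
  rcases hEe j with ⟨u, a, hEj⟩ | ⟨u, a, hEj⟩ | ⟨u, a, b, hb, hEj⟩
  · have hs : (fun w : Fin (m' + m) → ℤ => fun i => w (Fin.natAdd m' i)) ⁻¹' Ee j =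
        {w | dot (Fin.append (0 : Fin m' → ℤ) u) w = a} := by
      rw [hEj]; ext w; simp only [Set.mem_preimage, Set.mem_setOf_eq, hdot]
    rw [hs]; exact elem_eq _ _
  · have hs : (fun w : Fin (m' + m) → ℤ => fun i => w (Fin.natAdd m' i)) ⁻¹' Ee j =
        {w | dot (Fin.append (0 : Fin m' → ℤ) u) w > a} := by
      rw [hEj]; ext w; simp only [Set.mem_preimage, Set.mem_setOf_eq, hdot, gt_iff_lt]
    rw [hs]; exact elem_gt _ _
  · have hs : (fun w : Fin (m' + m) → ℤ => fun i => w (Fin.natAdd m' i)) ⁻¹' Ee j =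
        {w | dot (Fin.append (0 : Fin m' → ℤ) u) w ≡ a [ZMOD b]} := by
      rw [hEj]; ext w; simp only [Set.mem_preimage, Set.mem_setOf_eq, hdot]
    rw [hs]; exact elem_mod _ _ _ hb

lemma dot_append {m1 m2 : ℕ} (u : Fin m1 → ℤ) (v : Fin m2 → ℤ)
    (z : Fin m1 → ℤ) (x : Fin m2 → ℤ) :
    dot (Fin.append u v) (Fin.append z x) = dot u z + dot v x := by
  rw [dot, Fin.sum_univ_add]
  simp [Fin.append_left, Fin.append_right, dot]

lemma dot_single (j : Fin m) (y : Fin m → ℤ) : dot (Pi.single j (1 : ℤ)) y = y j := by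
  rw [dot]
  rw [Finset.sum_eq_single j]
  · simp
  · intro i _ hij; simp [Pi.single_apply, hij]
  · intro hj; exact absurd (Finset.mem_univ j) hj

lemma dot_negrow {f : Fin m → ℤ} (x : Fin m → ℤ) :
    dot (fun i => -(f i)) x = -(∑ i, f i * x i) := by
  rw [dot]
  simp [neg_mul, Finset.sum_neg_distrib]

end PolyProof

/-- The image of a polyhedral set under an integral affine transformation is polyhedral. -/
theorem polyhedral_image_affine {m m' : ℕ} (hm : 0 < m) (hm' : 0 < m')
    (A : Matrix (Fin m') (Fin m) ℤ) (q : Fin m' → ℤ)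
    (E : (Fin m → ℤ) → (Fin m' → ℤ)) (hE : ∀ p, E p = A.mulVec p + q)
    (P : Set (Fin m → ℤ)) (hP : IsPolyhedralSet P) :
    IsPolyhedralSet (E '' P) := by
  classical
  set g : (Fin (m' + m) → ℤ) → (Fin m → ℤ) := fun w => fun i => w (Fin.natAdd m' i) with hg
  set cvec : Fin m' → (Fin (m' + m) → ℤ) :=
    fun j => Fin.append (Pi.single j (1 : ℤ)) (fun i => -(A j i)) with hcvec
  set G : Set (Fin (m' + m) → ℤ) :=
    (⋂ j, {w | PolyProof.dot (cvec j) w = q j}) ∩ (g ⁻¹' P) with hG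
  have hGpoly : IsPolyhedralSet G := by
    apply PolyProof.basic_inter_poly
    · exact ⟨m', fun j => {w | PolyProof.dot (cvec j) w = q j},
        fun j => PolyProof.elem_eq _ _, rfl⟩
    · exact PolyProof.poly_preimage_natAdd m' P hP
  have hdotc : ∀ (j : Fin m') (y : Fin m' → ℤ) (x : Fin m → ℤ),
      PolyProof.dot (cvec j) (Fin.append y x) = y j - ∑ i, A j i * x i := by
    intro j y x
    simp only [hcvec]
    rw [PolyProof.dot_append, PolyProof.dot_single, PolyProof.dot_negrow]
    ring
  have hmulVec : ∀ (x : Fin m → ℤ) (j : Fin m'),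
      (A.mulVec x + q) j = (∑ i, A j i * x i) + q j := by
    intro x j
    simp [Matrix.mulVec, dotProduct]
  have himg : E '' P = {y : Fin m' → ℤ | ∃ x : Fin m → ℤ, Fin.append y x ∈ G} := by
    ext y
    constructor
    · rintro ⟨p, hp, rfl⟩
      refine ⟨p, ?_, ?_⟩
      · refine Set.mem_iInter.mpr fun j => ?_
        show PolyProof.dot (cvec j) (Fin.append (E p) p) = q j
        rw [hdotc]
        rw [hE p, hmulVec]
        ring
      · show g (Fin.append (E p) p) ∈ P
        have hgp : g (Fin.append (E p) p) = p := by
          funext i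
          simp [hg, Fin.append_right]
        rw [hgp]
        exact hp
    · rintro ⟨x, h1, h2⟩
      have hgx : g (Fin.append y x) = x := by
        funext i
        simp [hg, Fin.append_right]
      have h2' : g (Fin.append y x) ∈ P := h2
      rw [hgx] at h2'
      refine ⟨x, h2', ?_⟩
      rw [hE]
      funext j
      have hj := Set.mem_iInter.mp h1 j
      have hj2 : PolyProof.dot (cvec j) (Fin.append y x) = q j := hj
      rw [hdotc] at hj2
      rw [hmulVec]
      omega
  rw [himg]
  exact PolyProof.poly_proj_many m G hGpoly
end

section
/- Let m be a positive integer, let P ⊆ ℕᵐ be a positive polyhedral set, and let ω₁, …, ω_m be positive integers. Define the weight of a vector (a₁,…,a_m) ∈ P to be a₁ω₁ + ⋯ + a_mω_m. Then the weighted growth series ∑_{n≥0} #{p ∈ P : ω(p) = n} zⁿ is a rational power series (the counts being finite since all ωᵢ are positive). -/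
set_option linter.unusedSectionVars false
set_option linter.unusedTactic false
set_option linter.unusedVariables false
set_option maxHeartbeats 1000000

/-- A formal power series with integer coefficients is rational if it is the quotient
of two integer polynomials. -/
def IsRationalSeries (f : PowerSeries ℤ) : Prop :=
  ∃ p q : Polynomial ℤ, q ≠ 0 ∧ f * (q : PowerSeries ℤ) = (p : PowerSeries ℤ)


open Set Pointwise

namespace PolyGrowth


variable {σ : Type*} [Finite σ]

def Minls (U : Set (σ → ℕ)) : Set (σ → ℕ) := {u ∈ U | ∀ v ∈ U, v ≤ u → v = u}

lemma minls_subset (U : Set (σ → ℕ)) : Minls U ⊆ U := fun _ hu => hu.1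

lemma dickson_isPWO (s : Set (σ → ℕ)) : s.IsPWO := by
  haveI : IsWellOrder ℕ (· < ·) := inferInstance
  exact (Set.IsPWO.pi (fun _ : σ => Set.IsPWO.of_linearOrder (Set.univ : Set ℕ))).mono
    (fun x _ => Set.mem_univ_pi.mpr fun _ => trivial)

lemma minls_finite (U : Set (σ → ℕ)) : (Minls U).Finite := by
  refine IsAntichain.finite_of_partiallyWellOrderedOn
    (r := (· ≤ ·)) ?_ (dickson_isPWO (Minls U))
  intro a ha b hb hne hab
  exact hne (hb.2 a ha.1 hab)

lemma exists_min_le {U : Set (σ → ℕ)} {u : σ → ℕ} (hu : u ∈ U) :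
    ∃ v ∈ Minls U, v ≤ u := by
  set U' := {v ∈ U | v ≤ u} with hU'
  have hwf : U'.IsWF := (dickson_isPWO U').isWF
  have hne : U'.Nonempty := ⟨u, hu, le_rfl⟩
  refine ⟨hwf.min hne, ⟨(hwf.min_mem hne).1, ?_⟩, (hwf.min_mem hne).2⟩
  intro w hw hwle
  by_contra hne'
  have hlt : w < hwf.min hne := lt_of_le_of_ne hwle hne'
  exact hwf.not_lt_min hne ⟨hw, hwle.trans (hwf.min_mem hne).2⟩ hlt

/-! ### Finite generation of stable subsets -/

lemma stable_fg {E N : Set (σ → ℕ)} (hE : E.Finite) (hN : N.Finite)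
    {D : Set (σ → ℕ)}
    (hsub : D ⊆ E + (AddSubmonoid.closure N : Set (σ → ℕ)))
    (hstab : ∀ d ∈ D, ∀ q ∈ AddSubmonoid.closure N, d + q ∈ D) :
    ∃ D₀ : Set (σ → ℕ), D₀.Finite ∧ D₀ ⊆ D ∧
      D = D₀ + (AddSubmonoid.closure N : Set (σ → ℕ)) := by
  classical
  haveI : Fintype ↥N := hN.fintype
  set φ : (↥N → ℕ) → (σ → ℕ) := fun c => ∑ i : ↥N, c i • (i : σ → ℕ) with hφ
  have φ_add : ∀ c c', φ (c + c') = φ c + φ c' := by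
    intro c c'
    rw [hφ]
    simp only [Pi.add_apply, add_smul]
    rw [Finset.sum_add_distrib]
  have φ_mem : ∀ c, φ c ∈ AddSubmonoid.closure N := by
    intro c
    refine AddSubmonoid.sum_mem (AddSubmonoid.closure N) fun i _ => ?_
    have hi : (i : σ → ℕ) ∈ AddSubmonoid.closure N := AddSubmonoid.subset_closure i.2
    exact nsmul_mem hi (c i)
  have φ_surj : ∀ q ∈ AddSubmonoid.closure N, ∃ c, φ c = q := by
    intro q hq
    induction hq using AddSubmonoid.closure_induction with
    | mem x hx =>
        refine ⟨Pi.single ⟨x, hx⟩ 1, ?_⟩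
        show (∑ i : ↥N, Pi.single (⟨x, hx⟩ : ↥N) 1 i • (i : σ → ℕ)) = x
        rw [Finset.sum_eq_single (⟨x, hx⟩ : ↥N)]
        · simp
        · intro b _ hb; rw [Pi.single_eq_of_ne hb]; simp
        · simp
    | zero =>
        refine ⟨0, ?_⟩
        show (∑ i : ↥N, (0 : ↥N → ℕ) i • (i : σ → ℕ)) = 0
        simp
    | add x y hx hy ihx ihy =>
        obtain ⟨c₁, rfl⟩ := ihx; obtain ⟨c₂, rfl⟩ := ihy
        exact ⟨c₁ + c₂, φ_add _ _⟩
  set D₀ : Set (σ → ℕ) := ⋃ e ∈ E, (fun c => e + φ c) '' Minls {c | e + φ c ∈ D} with hD₀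
  have hD₀D : D₀ ⊆ D := by
    intro x hx
    simp only [hD₀, Set.mem_iUnion, Set.mem_image] at hx
    obtain ⟨e, he, c, hc, rfl⟩ := hx
    exact hc.1
  refine ⟨D₀, hE.biUnion fun e _ => (minls_finite _).image _, hD₀D, ?_⟩
  apply Set.Subset.antisymm
  · intro d hd
    obtain ⟨e, he, q, hq, rfl⟩ := Set.mem_add.mp (hsub hd)
    obtain ⟨c, rfl⟩ := φ_surj q hq
    have hcU : c ∈ {c' | e + φ c' ∈ D} := hd
    obtain ⟨c', hc', hle⟩ := exists_min_le hcU
    have hsplit : c = c' + (c - c') := by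
      funext i; have hci : c' i ≤ c i := Pi.le_def.mp hle i
      simp only [Pi.add_apply, Pi.sub_apply]; omega
    refine Set.mem_add.mpr ⟨e + φ c', ?_, φ (c - c'), φ_mem _, ?_⟩
    · simp only [hD₀, Set.mem_iUnion]
      exact ⟨e, he, Set.mem_image_of_mem _ hc'⟩
    · rw [add_assoc, ← φ_add, ← hsplit]
  · rintro x hx
    obtain ⟨d₀, hd₀, q, hq, rfl⟩ := Set.mem_add.mp hx
    exact hstab d₀ (hD₀D hd₀) q hq

/-! ### Structure of solution sets of linear systems over ℕ -/

variable [Fintype σ]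

def lin (v : σ → ℤ) (x : σ → ℕ) : ℤ := ∑ i, v i * (x i : ℤ)

lemma lin_add (v : σ → ℤ) (x y : σ → ℕ) : lin v (x + y) = lin v x + lin v y := by
  simp [lin, Pi.add_apply, Nat.cast_add, mul_add, Finset.sum_add_distrib]

lemma lin_sub (v : σ → ℤ) {x y : σ → ℕ} (h : y ≤ x) :
    lin v (x - y) = lin v x - lin v y := by
  rw [lin, lin, lin, ← Finset.sum_sub_distrib]
  refine Finset.sum_congr rfl fun i _ => ?_
  rw [Pi.sub_apply, Nat.cast_sub (h i)]
  ring

lemma solution_set_eq {k : ℕ} (v : Fin k → σ → ℤ) (c : Fin k → ℤ) :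
    ∃ E N : Set (σ → ℕ), E.Finite ∧ N.Finite ∧
      {x | ∀ j, lin (v j) x = c j} = E + (AddSubmonoid.closure N : Set (σ → ℕ)) := by
  classical
  have hclosure : (AddSubmonoid.closure (Minls ({x | ∀ j, lin (v j) x = 0} \ {0})) :
      Set (σ → ℕ)) = {x | ∀ j, lin (v j) x = 0} := by
    apply Set.Subset.antisymm
    · intro x hx
      induction hx using AddSubmonoid.closure_induction with
      | mem y hy => exact (minls_subset _ hy).1
      | zero => intro j; simp [lin]
      | add y z hy hz ihy ihz =>
          intro j; rw [lin_add, ihy j, ihz j]; ring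
    · have key : ∀ s : ℕ, ∀ x ∈ {x : σ → ℕ | ∀ j, lin (v j) x = 0}, (∑ i, x i) ≤ s →
          x ∈ AddSubmonoid.closure (Minls ({x | ∀ j, lin (v j) x = 0} \ {0})) := by
        intro s
        induction s with
        | zero =>
            intro x hx hs
            have hx0 : x = 0 := by
              funext i
              have h : x i ≤ ∑ i', x i' := Finset.single_le_sum
                (fun _ _ => Nat.zero_le _) (Finset.mem_univ i)
              simp only [Pi.zero_apply]
              omega
            rw [hx0]; exact zero_mem _
        | succ s ih =>
            intro x hx hs
            by_cases h0 : x = 0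
            · rw [h0]; exact zero_mem _
            · have hxm : x ∈ {x : σ → ℕ | ∀ j, lin (v j) x = 0} \ {0} := ⟨hx, h0⟩
              obtain ⟨n, hn, hle⟩ := exists_min_le hxm
              have hnH := minls_subset _ hn
              have hsub' : x - n ∈ {x : σ → ℕ | ∀ j, lin (v j) x = 0} := by
                intro j; rw [lin_sub (v j) hle, hx j, hnH.1 j]; ring
              have hx_eq : x = n + (x - n) := by
                funext i; have hni : n i ≤ x i := Pi.le_def.mp hle i
                simp only [Pi.add_apply, Pi.sub_apply]; omega
              have hsum : (∑ i, (x - n) i) ≤ s := by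
                have h1 : ∑ i, x i = (∑ i, (x - n) i) + ∑ i, n i := by
                  rw [← Finset.sum_add_distrib]
                  refine Finset.sum_congr rfl fun i _ => ?_
                  have hni : n i ≤ x i := Pi.le_def.mp hle i
                  simp only [Pi.sub_apply]; omega
                have h2 : 0 < ∑ i, n i := by
                  have hne : ∃ i, n i ≠ 0 := by
                    by_contra hno; push_neg at hno
                    exact hnH.2 (funext fun i => hno i)
                  obtain ⟨i, hi⟩ := hne
                  have h3 : n i ≤ ∑ i', n i' := Finset.single_le_sum
                    (fun _ _ => Nat.zero_le _) (Finset.mem_univ i)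
                  omega
                omega
              rw [hx_eq]
              exact add_mem (AddSubmonoid.subset_closure hn) (ih _ hsub' hsum)
      intro x hx; exact key _ x hx le_rfl
  refine ⟨Minls {x | ∀ j, lin (v j) x = c j},
    Minls ({x | ∀ j, lin (v j) x = 0} \ {0}), minls_finite _, minls_finite _, ?_⟩
  apply Set.Subset.antisymm
  · intro x hx
    obtain ⟨e, he, hle⟩ := exists_min_le hx
    refine Set.mem_add.mpr ⟨e, he, x - e, ?_, ?_⟩
    · rw [hclosure]
      intro j; rw [lin_sub (v j) hle, hx j, (minls_subset _ he) j]; ring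
    · funext i; have hei : e i ≤ x i := Pi.le_def.mp hle i
      simp only [Pi.add_apply, Pi.sub_apply]; omega
  · rintro x hx
    obtain ⟨e, he, q, hq, rfl⟩ := Set.mem_add.mp hx
    rw [hclosure] at hq
    intro j
    rw [lin_add, (minls_subset _ he) j, hq j, add_zero]



/-! ### Rational series closure lemmas -/

lemma isRat_coe (p : Polynomial ℤ) : IsRationalSeries (p : PowerSeries ℤ) :=
  ⟨p, 1, one_ne_zero, by simp⟩

lemma isRat_zero : IsRationalSeries 0 := by
  simpa using isRat_coe 0

lemma isRat_add {f g : PowerSeries ℤ} (hf : IsRationalSeries f) (hg : IsRationalSeries g) :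
    IsRationalSeries (f + g) := by
  obtain ⟨p₁, q₁, hq₁, h₁⟩ := hf
  obtain ⟨p₂, q₂, hq₂, h₂⟩ := hg
  refine ⟨p₁ * q₂ + p₂ * q₁, q₁ * q₂, mul_ne_zero hq₁ hq₂, ?_⟩
  push_cast [Polynomial.coe_mul, Polynomial.coe_add]
  rw [add_mul]
  calc f * (↑q₁ * ↑q₂) + g * (↑q₁ * ↑q₂)
      = f * ↑q₁ * ↑q₂ + g * ↑q₂ * ↑q₁ := by ring
    _ = ↑p₁ * ↑q₂ + ↑p₂ * ↑q₁ := by rw [h₁, h₂]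

lemma isRat_neg {f : PowerSeries ℤ} (hf : IsRationalSeries f) : IsRationalSeries (-f) := by
  obtain ⟨p, q, hq, h⟩ := hf
  exact ⟨-p, q, hq, by rw [Polynomial.coe_neg, neg_mul, h]⟩

lemma isRat_sub {f g : PowerSeries ℤ} (hf : IsRationalSeries f) (hg : IsRationalSeries g) :
    IsRationalSeries (f - g) := by
  rw [sub_eq_add_neg]; exact isRat_add hf (isRat_neg hg)

lemma isRat_of_mul_coe {f : PowerSeries ℤ} (q : Polynomial ℤ) (hq : q ≠ 0)
    (h : IsRationalSeries (f * (q : PowerSeries ℤ))) : IsRationalSeries f := by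
  obtain ⟨p, q', hq', h'⟩ := h
  exact ⟨p, q * q', mul_ne_zero hq hq', by rw [Polynomial.coe_mul, ← mul_assoc, h']⟩

/-! ### The weight and the growth series -/

variable {m : ℕ} (ω : Fin m → ℕ)

def wt (z : Fin m → ℕ) : ℕ := ∑ i, ω i * z i

lemma wt_add (a b : Fin m → ℕ) : wt ω (a + b) = wt ω a + wt ω b := by
  simp [wt, mul_add, Finset.sum_add_distrib]

noncomputable def F (S : Set (Fin m → ℕ)) : PowerSeries ℤ :=
  PowerSeries.mk fun n => ((S ∩ {z | wt ω z = n}).ncard : ℤ)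

variable {ω}

lemma slice_finite (hω : ∀ i, 0 < ω i) (S : Set (Fin m → ℕ)) (n : ℕ) :
    (S ∩ {z | wt ω z = n}).Finite := by
  refine (Set.Finite.pi (fun i : Fin m => Set.finite_Iic n)).subset ?_
  rintro z ⟨-, hz⟩
  rw [Set.mem_univ_pi]
  intro i
  have h1 : z i ≤ ω i * z i := Nat.le_mul_of_pos_left _ (hω i)
  have h2 : ω i * z i ≤ wt ω z :=
    Finset.single_le_sum (f := fun i => ω i * z i) (fun _ _ => Nat.zero_le _)
      (Finset.mem_univ i)
  simpa using h1.trans (h2.trans_eq hz)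

lemma F_valuation (hω : ∀ i, 0 < ω i) (S T : Set (Fin m → ℕ)) :
    F ω (S ∪ T) + F ω (S ∩ T) = F ω S + F ω T := by
  ext n
  simp only [map_add, F, PowerSeries.coeff_mk]
  have key := Set.ncard_union_add_ncard_inter (S ∩ {z | wt ω z = n}) (T ∩ {z | wt ω z = n})
    (slice_finite hω S n) (slice_finite hω T n)
  have h1 : (S ∪ T) ∩ {z | wt ω z = n} = S ∩ {z | wt ω z = n} ∪ T ∩ {z | wt ω z = n} :=
    Set.union_inter_distrib_right _ _ _
  have h2 : (S ∩ T) ∩ {z | wt ω z = n} =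
      (S ∩ {z | wt ω z = n}) ∩ (T ∩ {z | wt ω z = n}) := by
    ext x; simp [Set.mem_inter_iff]; tauto
  rw [h1, h2]
  exact_mod_cast congrArg (Nat.cast (R := ℤ)) key

lemma F_empty : F ω (∅ : Set (Fin m → ℕ)) = 0 := by
  ext n; simp [F]

lemma F_singleton (e : Fin m → ℕ) :
    F ω {e} = PowerSeries.monomial (wt ω e) 1 := by
  ext n
  rw [F, PowerSeries.coeff_mk, PowerSeries.coeff_monomial]
  by_cases h : wt ω e = n
  · have : {e} ∩ {z | wt ω z = n} = {e} := by
      ext x; simp +contextual [h]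
    rw [this]
    simp [h]
  · have h2 : {e} ∩ {z | wt ω z = n} = ∅ := by
      ext x
      simp only [Set.mem_inter_iff, Set.mem_singleton_iff, Set.mem_setOf_eq,
        Set.mem_empty_iff_false, iff_false, not_and]
      rintro rfl; exact h
    rw [h2, if_neg (fun hn => h hn.symm)]
    simp

lemma F_shift (p : Fin m → ℕ) (S : Set (Fin m → ℕ)) :
    F ω ({p} + S) = PowerSeries.X ^ (wt ω p) * F ω S := by
  ext n
  rw [F, PowerSeries.coeff_mk, PowerSeries.coeff_X_pow_mul']
  by_cases h : wt ω p ≤ n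
  · rw [if_pos h, F, PowerSeries.coeff_mk]
    have himg : ({p} + S) ∩ {z | wt ω z = n} =
        (p + ·) '' (S ∩ {z | wt ω z = n - wt ω p}) := by
      ext x
      simp only [Set.singleton_add, Set.mem_inter_iff, Set.mem_image, Set.mem_setOf_eq]
      constructor
      · rintro ⟨⟨s, hs, rfl⟩, hw⟩
        rw [wt_add] at hw
        exact ⟨s, ⟨hs, by omega⟩, rfl⟩
      · rintro ⟨s, ⟨hs, hw⟩, rfl⟩
        exact ⟨⟨s, hs, rfl⟩, by rw [wt_add]; omega⟩
    rw [himg, Set.ncard_image_of_injective _ (add_right_injective p)]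
  · rw [if_neg h]
    have : ({p} + S) ∩ {z | wt ω z = n} = ∅ := by
      ext x
      simp only [Set.singleton_add, Set.mem_inter_iff, Set.mem_image, Set.mem_setOf_eq,
        Set.mem_empty_iff_false, iff_false, not_and]
      rintro ⟨s, hs, rfl⟩ hw
      rw [wt_add] at hw
      omega
    rw [this, Set.ncard_empty]
    simp

lemma isRat_F_finite (hω : ∀ i, 0 < ω i) {S : Set (Fin m → ℕ)} (hS : S.Finite) :
    IsRationalSeries (F ω S) := by
  refine Set.Finite.induction_on (motive := fun S _ => IsRationalSeries (F ω S)) S hS (by rw [F_empty]; exact isRat_zero) ?_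
  intro a s ha hs ih
  have hval := F_valuation hω {a} s
  have hinter : ({a} : Set (Fin m → ℕ)) ∩ s = ∅ := by
    ext x; simp +contextual; rintro rfl; exact ha
  rw [hinter, F_empty, add_zero, Set.singleton_union] at hval
  rw [hval, F_singleton]
  have : (PowerSeries.monomial (wt ω a) 1) =
      ((Polynomial.monomial (wt ω a) 1 : Polynomial ℤ) : PowerSeries ℤ) := by
    rw [Polynomial.coe_monomial]
  exact isRat_add (this ▸ isRat_coe _) ih




section LinearSets

variable {m : ℕ} {ω : Fin m → ℕ}

lemma closure_insert_split (p : Fin m → ℕ) (N₀ : Set (Fin m → ℕ)) :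
    (AddSubmonoid.closure (insert p N₀) : Set (Fin m → ℕ)) =
      (AddSubmonoid.closure N₀ : Set (Fin m → ℕ)) ∪
      ({p} + (AddSubmonoid.closure (insert p N₀) : Set (Fin m → ℕ))) := by
  apply Set.Subset.antisymm
  · intro x hx
    induction hx using AddSubmonoid.closure_induction with
    | mem y hy =>
        rcases hy with rfl | hy
        · right
          exact Set.mem_add.mpr ⟨y, rfl, 0, zero_mem _, add_zero y⟩
        · left; exact AddSubmonoid.subset_closure hy
    | zero => left; exact zero_mem _
    | add y z hy hz ihy ihz =>
        rcases ihy with hy0 | hy1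
        · rcases ihz with hz0 | hz1
          · left; exact add_mem hy0 hz0
          · right
            obtain ⟨a, ha, b, hb, rfl⟩ := Set.mem_add.mp hz1
            obtain rfl : p = a := (Set.mem_singleton_iff.mp ha).symm
            refine Set.mem_add.mpr ⟨p, rfl, b + y, add_mem hb hy, ?_⟩
            abel
        · right
          obtain ⟨a, ha, b, hb, rfl⟩ := Set.mem_add.mp hy1
          obtain rfl : p = a := (Set.mem_singleton_iff.mp ha).symm
          refine Set.mem_add.mpr ⟨p, rfl, b + z, add_mem hb hz, ?_⟩
          abel
  · rintro x (hx | hx)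
    · exact AddSubmonoid.closure_mono (Set.subset_insert p N₀) hx
    · obtain ⟨a, ha, b, hb, rfl⟩ := Set.mem_add.mp hx
      obtain rfl : p = a := (Set.mem_singleton_iff.mp ha).symm
      exact add_mem (AddSubmonoid.subset_closure (Set.mem_insert p N₀)) hb

lemma isRat_F_linear_finset (hω : ∀ i, 0 < ω i) (Nf : Finset (Fin m → ℕ)) :
    0 ∉ Nf → ∀ E : Set (Fin m → ℕ), E.Finite →
    IsRationalSeries (F ω (E + (AddSubmonoid.closure ((Nf : Set (Fin m → ℕ))) : Set (Fin m → ℕ)))) := by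
  induction Nf using Finset.induction_on with
  | empty =>
    intro _ E hE
    rw [Finset.coe_empty, AddSubmonoid.closure_empty]
    have h2 : E + ((⊥ : AddSubmonoid (Fin m → ℕ)) : Set (Fin m → ℕ)) = E := by
      rw [AddSubmonoid.coe_bot, Set.add_singleton]
      simp
    rw [h2]
    exact isRat_F_finite hω hE
  | @insert p Nf₀ hpN₀ ih =>
    intro h0 E hE
    rw [Finset.coe_insert]
    set N₀ : Set (Fin m → ℕ) := (↑Nf₀ : Set (Fin m → ℕ)) with hN₀def
    have hN₀ : N₀.Finite := Nf₀.finite_toSet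
    have hp0 : p ≠ 0 := fun h => h0 (h ▸ Finset.mem_insert_self p Nf₀)
    have h0' : (0 : Fin m → ℕ) ∉ N₀ := fun h => h0 (Finset.mem_insert_of_mem (by exact_mod_cast h))
    have ih' : ∀ E : Set (Fin m → ℕ), E.Finite →
        IsRationalSeries (F ω (E + (AddSubmonoid.closure N₀ : Set (Fin m → ℕ)))) :=
      ih h0'
    set M : AddSubmonoid (Fin m → ℕ) := AddSubmonoid.closure (insert p N₀) with hM
    set M₀ : AddSubmonoid (Fin m → ℕ) := AddSubmonoid.closure N₀ with hM₀
    set S : Set (Fin m → ℕ) := E + (M : Set (Fin m → ℕ)) with hS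
    have hsplit : S = (E + (M₀ : Set (Fin m → ℕ))) ∪ ({p} + S) := by
      conv_lhs => rw [hS, closure_insert_split p N₀]
      rw [Set.add_union]
      congr 1
      rw [hS]
      exact add_left_comm E {p} (M : Set (Fin m → ℕ))
    have hDstab : ∀ d ∈ (E + (M₀ : Set (Fin m → ℕ))) ∩ ({p} + S),
        ∀ q ∈ AddSubmonoid.closure N₀, d + q ∈ (E + (M₀ : Set (Fin m → ℕ))) ∩ ({p} + S) := by
      rintro d ⟨hd1, hd2⟩ q hq
      constructor
      · obtain ⟨e, he, n0, hn0, hdn⟩ := Set.mem_add.mp hd1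
        refine Set.mem_add.mpr ⟨e, he, n0 + q, ?_, by rw [← add_assoc, hdn]⟩
        exact add_mem hn0 hq
      · obtain ⟨a, ha, s, hs, hds⟩ := Set.mem_add.mp hd2
        obtain ⟨e', he', u, hu, hsu⟩ := Set.mem_add.mp hs
        have huq : u + q ∈ (M : Set (Fin m → ℕ)) := by
          refine add_mem hu ?_
          exact AddSubmonoid.closure_mono (Set.subset_insert p N₀) hq
        refine Set.mem_add.mpr ⟨a, ha, s + q, ?_, by rw [← add_assoc, hds]⟩
        exact Set.mem_add.mpr ⟨e', he', u + q, huq, by rw [← add_assoc, hsu]⟩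
    have hDsub : (E + (M₀ : Set (Fin m → ℕ))) ∩ ({p} + S) ⊆ E + (M₀ : Set (Fin m → ℕ)) :=
      Set.inter_subset_left
    obtain ⟨D₀, hD₀fin, hD₀sub, hDeq⟩ := stable_fg hE hN₀ hDsub hDstab
    have hrat1 : IsRationalSeries (F ω (E + (M₀ : Set (Fin m → ℕ)))) := ih' E hE
    have hrat2 : IsRationalSeries (F ω ((E + (M₀ : Set (Fin m → ℕ))) ∩ ({p} + S))) := by
      rw [hDeq]; exact ih' D₀ hD₀fin
    have hval := F_valuation hω (E + (M₀ : Set (Fin m → ℕ))) ({p} + S)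
    rw [← hsplit, F_shift] at hval
    have hw : wt ω p ≠ 0 := by
      obtain ⟨i, hi⟩ := Function.ne_iff.mp hp0
      have h1 : ω i * p i ≤ wt ω p := Finset.single_le_sum
        (f := fun i => ω i * p i) (fun _ _ => Nat.zero_le _) (Finset.mem_univ i)
      have h2 : 0 < ω i * p i := Nat.mul_pos (hω i) (by simpa using Nat.pos_of_ne_zero hi)
      omega
    have hq : ((1 : Polynomial ℤ) - Polynomial.X ^ (wt ω p)) ≠ 0 := by
      intro h
      have h' := congrArg (fun q => Polynomial.coeff q 0) h
      simp [Polynomial.coeff_one, Polynomial.coeff_X_pow, Ne.symm hw] at h'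
    refine isRat_of_mul_coe _ hq ?_
    have hcoe : (((1 : Polynomial ℤ) - Polynomial.X ^ wt ω p : Polynomial ℤ) : PowerSeries ℤ)
        = 1 - PowerSeries.X ^ wt ω p := by
      rw [Polynomial.coe_sub, Polynomial.coe_one, Polynomial.coe_pow, Polynomial.coe_X]
    rw [hcoe]
    have hkey : F ω S * (1 - PowerSeries.X ^ wt ω p) =
        F ω (E + (M₀ : Set (Fin m → ℕ))) -
          F ω ((E + (M₀ : Set (Fin m → ℕ))) ∩ ({p} + S)) := by
      linear_combination hval
    rw [hkey]
    exact isRat_sub hrat1 hrat2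

lemma isRat_F_linear (hω : ∀ i, 0 < ω i) {N : Set (Fin m → ℕ)} (hN : N.Finite)
    (h0 : 0 ∉ N) {E : Set (Fin m → ℕ)} (hE : E.Finite) :
    IsRationalSeries (F ω (E + (AddSubmonoid.closure N : Set (Fin m → ℕ)))) := by
  have := isRat_F_linear_finset hω hN.toFinset
    (by rw [Set.Finite.mem_toFinset]; exact h0) E hE
  rwa [Set.Finite.coe_toFinset] at this

end LinearSets


section Encoding

variable {m : ℕ}

def coeN (z : Fin m → ℕ) : Fin m → ℤ := fun i => (z i : ℤ)

lemma elementary_encode {E : Set (Fin m → ℤ)} (hE : IsElementarySet E) :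
    ∃ (v : Fin m → ℤ) (α β c : ℤ), ∀ z : Fin m → ℕ,
      coeN z ∈ E ↔ ∃ y s : ℕ, (∑ i, v i * (z i : ℤ)) + α * y + β * s = c := by
  rcases hE with ⟨u, a, rfl⟩ | ⟨u, a, rfl⟩ | ⟨u, a, b, hb, rfl⟩
  · refine ⟨u, 0, 0, a, fun z => ?_⟩
    simp only [coeN, Set.mem_setOf_eq]
    constructor
    · intro h; exact ⟨0, 0, by push_cast; linarith⟩
    · rintro ⟨y, s, h⟩; push_cast at h; linarith
  · refine ⟨u, -1, 0, a + 1, fun z => ?_⟩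
    simp only [coeN, Set.mem_setOf_eq]
    constructor
    · intro h
      refine ⟨((∑ i, u i * (z i : ℤ)) - (a + 1)).toNat, 0, ?_⟩
      have h' : (0 : ℤ) ≤ (∑ i, u i * (z i : ℤ)) - (a + 1) := by omega
      rw [Int.toNat_of_nonneg h']
      push_cast
      ring
    · rintro ⟨y, s, h⟩
      have hy : (0 : ℤ) ≤ (y : ℤ) := Int.natCast_nonneg y
      omega
  · refine ⟨u, -b, b, a, fun z => ?_⟩
    simp only [coeN, Set.mem_setOf_eq]
    constructor
    · intro h
      obtain ⟨t, ht⟩ := (Int.modEq_iff_dvd.mp h)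
      refine ⟨(-t).toNat, t.toNat, ?_⟩
      have h1 : ((t.toNat : ℤ)) - (((-t).toNat : ℤ)) = t := Int.toNat_sub_toNat_neg t
      linear_combination b * h1 - ht
    · rintro ⟨y, s, h⟩
      refine Int.modEq_iff_dvd.mpr ⟨(s : ℤ) - (y : ℤ), ?_⟩
      linear_combination -h

lemma closure_diff_zero (s : Set (Fin m → ℕ)) :
    AddSubmonoid.closure (s \ {0}) = AddSubmonoid.closure s := by
  apply le_antisymm
  · exact AddSubmonoid.closure_mono Set.diff_subset
  · rw [AddSubmonoid.closure_le]
    intro x hx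
    by_cases hx0 : x = 0
    · rw [hx0]; exact zero_mem _
    · exact AddSubmonoid.subset_closure ⟨hx, hx0⟩

lemma isRat_basic {ω : Fin m → ℕ} (hω : ∀ i, 0 < ω i) {B : Set (Fin m → ℤ)}
    (hB : IsBasicPolyhedralSet B) :
    IsRationalSeries (F ω (coeN ⁻¹' B)) := by
  classical
  obtain ⟨k, El, hEl, rfl⟩ := hB
  choose v α β c hv using fun j => elementary_encode (hEl j)
  set w : Fin k → (Fin m ⊕ (Fin k ⊕ Fin k)) → ℤ := fun j => Sum.elim (v j)
    (Sum.elim (fun j' => if j' = j then α j else 0)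
      (fun j' => if j' = j then β j else 0)) with hw
  have hlin : ∀ (j : Fin k) (x : (Fin m ⊕ (Fin k ⊕ Fin k)) → ℕ), lin (w j) x =
      (∑ i, v j i * (x (Sum.inl i) : ℤ)) + α j * x (Sum.inr (Sum.inl j))
        + β j * x (Sum.inr (Sum.inr j)) := by
    intro j x
    rw [lin, Fintype.sum_sum_type, Fintype.sum_sum_type]
    have h1 : ∑ j' : Fin k, w j (Sum.inr (Sum.inl j')) * (x (Sum.inr (Sum.inl j')) : ℤ)
        = α j * x (Sum.inr (Sum.inl j)) := by
      rw [Finset.sum_eq_single j]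
      · simp [hw]
      · intro b _ hb
        simp [hw, hb]
      · intro h; exact absurd (Finset.mem_univ j) h
    have h2 : ∑ j' : Fin k, w j (Sum.inr (Sum.inr j')) * (x (Sum.inr (Sum.inr j')) : ℤ)
        = β j * x (Sum.inr (Sum.inr j)) := by
      rw [Finset.sum_eq_single j]
      · simp [hw]
      · intro b _ hb
        simp [hw, hb]
      · intro h; exact absurd (Finset.mem_univ j) h
    rw [h1, h2]
    have h3 : ∑ i : Fin m, w j (Sum.inl i) * (x (Sum.inl i) : ℤ)
        = ∑ i, v j i * (x (Sum.inl i) : ℤ) := by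
      refine Finset.sum_congr rfl fun i _ => ?_
      simp [hw]
    rw [h3]
    ring
  set π : ((Fin m ⊕ (Fin k ⊕ Fin k)) → ℕ) →+ (Fin m → ℕ) :=
    { toFun := fun x i => x (Sum.inl i)
      map_zero' := rfl
      map_add' := fun _ _ => rfl } with hπ
  have hclaim : coeN ⁻¹' (⋂ j, El j) = π '' {x | ∀ j, lin (w j) x = c j} := by
    ext z
    simp only [Set.mem_preimage, Set.mem_iInter, Set.mem_image, Set.mem_setOf_eq]
    constructor
    · intro hz
      choose y s hys using fun j => (hv j z).mp (hz j)
      refine ⟨Sum.elim z (Sum.elim y s), fun j => ?_, rfl⟩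
      rw [hlin]
      simpa using hys j
    · rintro ⟨x, hx, rfl⟩
      intro j
      refine (hv j _).mpr ⟨x (Sum.inr (Sum.inl j)), x (Sum.inr (Sum.inr j)), ?_⟩
      have := hx j
      rw [hlin] at this
      exact this
  obtain ⟨Es, Ns, hEs, hNs, hSol⟩ := solution_set_eq w c
  rw [hclaim, hSol, Set.image_add]
  have hmap : (π : ((Fin m ⊕ (Fin k ⊕ Fin k)) → ℕ) → (Fin m → ℕ)) ''
        (AddSubmonoid.closure Ns : Set _)
      = (AddSubmonoid.closure (π '' Ns) : Set (Fin m → ℕ)) := by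
    rw [← AddSubmonoid.coe_map]
    rw [AddMonoidHom.map_mclosure]
  rw [hmap, ← closure_diff_zero (π '' Ns)]
  have hfinE : (π '' Es).Finite := hEs.image _
  have hfinN : ((π '' Ns) \ {0}).Finite := (hNs.image _).sdiff
  have h0N : (0 : Fin m → ℕ) ∉ (π '' Ns) \ {0} := fun h => h.2 rfl
  exact isRat_F_linear hω hfinN h0N hfinE


lemma isBasic_inter {B₁ B₂ : Set (Fin m → ℤ)} (h₁ : IsBasicPolyhedralSet B₁)
    (h₂ : IsBasicPolyhedralSet B₂) : IsBasicPolyhedralSet (B₁ ∩ B₂) := by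
  obtain ⟨k₁, E₁, hE₁, rfl⟩ := h₁
  obtain ⟨k₂, E₂, hE₂, rfl⟩ := h₂
  refine ⟨k₁ + k₂, Fin.addCases E₁ E₂, ?_, ?_⟩
  · intro i
    induction i using Fin.addCases with
    | left j => simpa [Fin.addCases_left] using hE₁ j
    | right j => simpa [Fin.addCases_right] using hE₂ j
  · ext z
    simp only [Set.mem_inter_iff, Set.mem_iInter]
    constructor
    · rintro ⟨ha, hb⟩ i
      induction i using Fin.addCases with
      | left j => simpa [Fin.addCases_left] using ha j
      | right j => simpa [Fin.addCases_right] using hb j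
    · intro h
      exact ⟨fun j => by simpa [Fin.addCases_left] using h (Fin.castAdd k₂ j),
        fun j => by simpa [Fin.addCases_right] using h (Fin.natAdd k₁ j)⟩

lemma isRat_union {ω : Fin m → ℕ} (hω : ∀ i, 0 < ω i) :
    ∀ (k : ℕ) (B : Fin k → Set (Fin m → ℤ)), (∀ i, IsBasicPolyhedralSet (B i)) →
    IsRationalSeries (F ω (coeN ⁻¹' (⋃ i, B i))) := by
  intro k
  induction k with
  | zero =>
    intro B hB
    have h : (⋃ i : Fin 0, B i) = ∅ := by simp
    rw [h, Set.preimage_empty, F_empty]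
    exact isRat_zero
  | succ k ih =>
    intro B hB
    have hsplit : (⋃ i, B i) = (⋃ i : Fin k, B (Fin.castSucc i)) ∪ B (Fin.last k) := by
      ext z
      simp only [Set.mem_iUnion, Set.mem_union]
      constructor
      · rintro ⟨i, hi⟩
        rcases Fin.eq_castSucc_or_eq_last i with ⟨j, rfl⟩ | rfl
        · exact Or.inl ⟨j, hi⟩
        · exact Or.inr hi
      · rintro (⟨j, hj⟩ | h)
        · exact ⟨_, hj⟩
        · exact ⟨_, h⟩
    rw [hsplit, Set.preimage_union]
    have hA := ih (fun i => B (Fin.castSucc i)) (fun i => hB _)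
    have hB' := isRat_basic hω (hB (Fin.last k))
    have hI : IsRationalSeries (F ω ((coeN ⁻¹' (⋃ i : Fin k, B (Fin.castSucc i))) ∩
        (coeN ⁻¹' (B (Fin.last k))))) := by
      have heq : (coeN ⁻¹' (⋃ i : Fin k, B (Fin.castSucc i))) ∩
          (coeN ⁻¹' (B (Fin.last k)))
          = coeN ⁻¹' (⋃ i : Fin k, (B (Fin.castSucc i) ∩ B (Fin.last k))) := by
        rw [← Set.preimage_inter, Set.iUnion_inter]
      rw [heq]
      exact ih _ (fun i => isBasic_inter (hB _) (hB _))
    have hval := F_valuation hω (coeN ⁻¹' (⋃ i : Fin k, B (Fin.castSucc i)))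
      (coeN ⁻¹' (B (Fin.last k)))
    have hkey : F ω ((coeN ⁻¹' (⋃ i : Fin k, B (Fin.castSucc i))) ∪
        (coeN ⁻¹' (B (Fin.last k)))) =
        F ω (coeN ⁻¹' (⋃ i : Fin k, B (Fin.castSucc i))) +
        F ω (coeN ⁻¹' (B (Fin.last k))) -
        F ω ((coeN ⁻¹' (⋃ i : Fin k, B (Fin.castSucc i))) ∩
        (coeN ⁻¹' (B (Fin.last k)))) := by
      linear_combination hval
    rw [hkey]
    exact isRat_sub (isRat_add hA hB') hI

end Encoding

end PolyGrowth

/-- The weighted growth series of a positive polyhedral set, with positive integer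
weights on the coordinates, is rational. -/
theorem positive_polyhedral_growth_series_rational {m : ℕ} (hm : 0 < m)
    (P : Set (Fin m → ℤ)) (hP : IsPolyhedralSet P)
    (hPpos : ∀ z ∈ P, ∀ i, 0 ≤ z i)
    (ω : Fin m → ℕ) (hω : ∀ i, 0 < ω i) :
    IsRationalSeries (PowerSeries.mk fun n =>
      (Nat.card {z : P // (∑ i, (z : Fin m → ℤ) i * (ω i : ℤ)) = (n : ℤ)} : ℤ)) := by
  obtain ⟨k, B, hB, rfl⟩ := hP
  have hrat := PolyGrowth.isRat_union hω k B hB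
  have hser : (PowerSeries.mk fun n =>
      (Nat.card {z : (⋃ i, B i) // (∑ i, (z : Fin m → ℤ) i * (ω i : ℤ)) = (n : ℤ)} : ℤ))
      = PolyGrowth.F ω (PolyGrowth.coeN ⁻¹' (⋃ i, B i)) := by
    ext n
    rw [PolyGrowth.F, PowerSeries.coeff_mk, PowerSeries.coeff_mk]
    congr 1
    rw [← Nat.card_coe_set_eq]
    refine Nat.card_congr (Equiv.symm (Equiv.ofBijective (fun w =>
      ⟨⟨PolyGrowth.coeN w.1, w.2.1⟩, ?_⟩) ⟨?_, ?_⟩))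
    · -- weight condition
      have hw' : PolyGrowth.wt ω w.1 = n := w.2.2
      show (∑ i, (PolyGrowth.coeN w.1) i * (ω i : ℤ)) = (n : ℤ)
      have hcalc : (∑ i, (PolyGrowth.coeN w.1) i * (ω i : ℤ))
          = ((PolyGrowth.wt ω w.1 : ℕ) : ℤ) := by
        unfold PolyGrowth.wt PolyGrowth.coeN
        push_cast
        exact Finset.sum_congr rfl fun i _ => mul_comm _ _
      rw [hcalc, hw']
    · -- injective
      rintro ⟨w, hw⟩ ⟨w', hw'⟩ h
      have h1 : PolyGrowth.coeN w = PolyGrowth.coeN w' := congrArg (fun t => t.1.1) h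
      apply Subtype.ext
      show w = w'
      funext i
      have h2 := congrFun h1 i
      simp only [PolyGrowth.coeN] at h2
      exact_mod_cast h2
    · -- surjective
      rintro ⟨⟨z, hz⟩, hcond⟩
      have hnn : ∀ i, 0 ≤ z i := hPpos z hz
      refine ⟨⟨fun i => (z i).toNat, ?_, ?_⟩, ?_⟩
      · show PolyGrowth.coeN (fun i => (z i).toNat) ∈ ⋃ i, B i
        have : PolyGrowth.coeN (fun i => (z i).toNat) = z := by
          funext i
          exact Int.toNat_of_nonneg (hnn i)
        rw [this]; exact hz
      · show PolyGrowth.wt ω (fun i => (z i).toNat) = n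
        have hcast : (PolyGrowth.wt ω (fun i => (z i).toNat) : ℤ) = (n : ℤ) := by
          unfold PolyGrowth.wt
          push_cast
          rw [← hcond]
          refine Finset.sum_congr rfl fun i _ => ?_
          rw [Int.toNat_of_nonneg (hnn i)]
          ring
        exact_mod_cast hcast
      · apply Subtype.ext
        apply Subtype.ext
        show PolyGrowth.coeN (fun i => (z i).toNat) = z
        funext i
        exact Int.toNat_of_nonneg (hnn i)
  rw [hser]
  exact hrat
end

section
/- Let m and k be positive integers, let P ⊆ ℤᵐ be a polyhedral set, and suppose there exist polyhedral sets X₁, …, X_k ⊆ ℤᵐ such that P ⊆ X₁ ∪ ⋯ ∪ X_k. Then there exist polyhedral sets Y₁, …, Y_k with Yᵢ ⊆ Xᵢ for each i, with Yᵢ ∩ Y_j = ∅ whenever i ≠ j, and with P = Y₁ ∪ ⋯ ∪ Y_k. -/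
namespace PolyAux

variable {m : ℕ}

lemma elem_poly {E : Set (Fin m → ℤ)} (h : IsElementarySet E) : IsPolyhedralSet E :=
  ⟨1, fun _ => E, fun _ => ⟨1, fun _ => E, fun _ => h, (Set.iInter_const E).symm⟩,
    (Set.iUnion_const E).symm⟩

lemma poly_empty : IsPolyhedralSet (∅ : Set (Fin m → ℤ)) :=
  ⟨0, Fin.elim0, fun i => i.elim0, by simp⟩

lemma poly_univ : IsPolyhedralSet (Set.univ : Set (Fin m → ℤ)) :=
  ⟨1, fun _ => Set.univ, fun _ => ⟨0, Fin.elim0, fun i => i.elim0, by simp⟩,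
    (Set.iUnion_const _).symm⟩

lemma basic_iInter {ι : Type} [Fintype ι] (E : ι → Set (Fin m → ℤ))
    (h : ∀ i, IsElementarySet (E i)) : IsBasicPolyhedralSet (⋂ i, E i) :=
  ⟨Fintype.card ι, fun j => E ((Fintype.equivFin ι).symm j), fun _ => h _, by
    rw [(Fintype.equivFin ι).symm.surjective.iInter_comp]⟩

lemma poly_iUnion_basic {ι : Type} [Fintype ι] (B : ι → Set (Fin m → ℤ))
    (h : ∀ i, IsBasicPolyhedralSet (B i)) : IsPolyhedralSet (⋃ i, B i) :=
  ⟨Fintype.card ι, fun j => B ((Fintype.equivFin ι).symm j), fun _ => h _, by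
    rw [(Fintype.equivFin ι).symm.surjective.iUnion_comp]⟩

lemma poly_iUnion {ι : Type} [Fintype ι] (B : ι → Set (Fin m → ℤ))
    (h : ∀ i, IsPolyhedralSet (B i)) : IsPolyhedralSet (⋃ i, B i) := by
  choose n C hC hB using h
  have : (⋃ i, B i) = ⋃ p : Σ i : ι, Fin (n i), C p.1 p.2 := by
    rw [Set.iUnion_sigma]
    exact Set.iUnion_congr fun i => (hB i)
  rw [this]
  exact poly_iUnion_basic _ fun p => hC p.1 p.2

lemma basic_inter {B C : Set (Fin m → ℤ)} (hB : IsBasicPolyhedralSet B)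
    (hC : IsBasicPolyhedralSet C) : IsBasicPolyhedralSet (B ∩ C) := by
  obtain ⟨a, E, hE, rfl⟩ := hB
  obtain ⟨b, F, hF, rfl⟩ := hC
  have : (⋂ i, E i) ∩ (⋂ i, F i) = ⋂ p : Fin a ⊕ Fin b, Sum.elim E F p := by
    ext z; simp [Sum.forall]
  rw [this]
  exact basic_iInter _ (by rintro (i | j) <;> simp [hE, hF])

lemma poly_inter {B C : Set (Fin m → ℤ)} (hB : IsPolyhedralSet B)
    (hC : IsPolyhedralSet C) : IsPolyhedralSet (B ∩ C) := by
  obtain ⟨a, E, hE, rfl⟩ := hB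
  obtain ⟨b, F, hF, rfl⟩ := hC
  have : (⋃ i, E i) ∩ (⋃ i, F i) = ⋃ p : Fin a × Fin b, E p.1 ∩ F p.2 := by
    ext z; simp [Set.mem_iUnion, Prod.exists]
  rw [this]
  exact poly_iUnion_basic _ fun p => basic_inter (hE p.1) (hF p.2)

lemma poly_union {B C : Set (Fin m → ℤ)} (hB : IsPolyhedralSet B)
    (hC : IsPolyhedralSet C) : IsPolyhedralSet (B ∪ C) := by
  rw [Set.union_eq_iUnion]
  refine poly_iUnion _ ?_
  rintro (_ | _)
  · simpa using hC
  · simpa using hB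

lemma poly_biInter {ι : Type} (s : Finset ι) (B : ι → Set (Fin m → ℤ))
    (h : ∀ i ∈ s, IsPolyhedralSet (B i)) : IsPolyhedralSet (⋂ i ∈ s, B i) := by
  classical
  induction s using Finset.induction with
  | empty => simpa using poly_univ
  | insert x s hx ih =>
    rw [Finset.set_biInter_insert]
    exact poly_inter (h _ (by simp)) (ih fun i hi => h i (by simp [hi]))

lemma poly_iInter {ι : Type} [Fintype ι] (B : ι → Set (Fin m → ℤ))
    (h : ∀ i, IsPolyhedralSet (B i)) : IsPolyhedralSet (⋂ i, B i) := by
  have : (⋂ i, B i) = ⋂ i ∈ (Finset.univ : Finset ι), B i := by simp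
  rw [this]
  exact poly_biInter _ _ fun i _ => h i

lemma elem_compl {E : Set (Fin m → ℤ)} (h : IsElementarySet E) : IsPolyhedralSet Eᶜ := by
  classical
  rcases h with ⟨u, a, rfl⟩ | ⟨u, a, rfl⟩ | ⟨u, a, b, hb, rfl⟩
  · have : ({z : Fin m → ℤ | (∑ i, u i * z i) = a})ᶜ =
        {z | (∑ i, u i * z i) > a} ∪ {z | (∑ i, (fun i => -u i) i * z i) > -a} := by
      ext z
      simp only [Set.mem_compl_iff, Set.mem_setOf_eq, Set.mem_union, neg_mul,
        Finset.sum_neg_distrib]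
      omega
    rw [this]
    exact poly_union (elem_poly (Or.inr (Or.inl ⟨u, a, rfl⟩)))
      (elem_poly (Or.inr (Or.inl ⟨fun i => -u i, -a, rfl⟩)))
  · have : ({z : Fin m → ℤ | (∑ i, u i * z i) > a})ᶜ =
        {z | (∑ i, (fun i => -u i) i * z i) > -a - 1} := by
      ext z
      simp only [Set.mem_compl_iff, Set.mem_setOf_eq, neg_mul, Finset.sum_neg_distrib]
      omega
    rw [this]
    exact elem_poly (Or.inr (Or.inl ⟨fun i => -u i, -a - 1, rfl⟩))
  · have key : ({z : Fin m → ℤ | (∑ i, u i * z i) ≡ a [ZMOD b]})ᶜ =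
        ⋃ c : Fin b.toNat,
          if ((c : ℤ) ≡ a [ZMOD b]) then (∅ : Set (Fin m → ℤ))
          else {z | (∑ i, u i * z i) ≡ (c : ℤ) [ZMOD b]} := by
      ext z
      simp only [Set.mem_compl_iff, Set.mem_setOf_eq, Set.mem_iUnion]
      constructor
      · intro hz
        set s := (∑ i, u i * z i) with hs
        have h0 : (0 : ℤ) ≤ s % b := Int.emod_nonneg _ (by omega)
        have h1 : s % b < b := Int.emod_lt_of_pos _ hb
        refine ⟨⟨(s % b).toNat, by omega⟩, ?_⟩
        have hc : (((⟨(s % b).toNat, by omega⟩ : Fin b.toNat) : ℤ)) = s % b := by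
          simp; omega
        have hme : s ≡ ((⟨(s % b).toNat, by omega⟩ : Fin b.toNat) : ℤ) [ZMOD b] := by
          rw [hc]
          show s % b = (s % b) % b
          rw [Int.emod_emod_of_dvd _ dvd_rfl]
        rw [if_neg]
        · exact hme
        · intro hcon
          exact hz (hme.trans hcon)
      · rintro ⟨c, hc⟩
        split_ifs at hc with h
        · exact absurd hc (Set.notMem_empty z)
        · intro hz
          exact h (hc.symm.trans hz)
    rw [key]
    refine poly_iUnion _ fun c => ?_
    split_ifs with h
    · exact poly_empty
    · exact elem_poly (Or.inr (Or.inr ⟨u, (c : ℤ), b, hb, rfl⟩))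

lemma basic_compl {B : Set (Fin m → ℤ)} (h : IsBasicPolyhedralSet B) :
    IsPolyhedralSet Bᶜ := by
  obtain ⟨n, E, hE, rfl⟩ := h
  rw [Set.compl_iInter]
  exact poly_iUnion _ fun i => elem_compl (hE i)

lemma poly_compl {P : Set (Fin m → ℤ)} (h : IsPolyhedralSet P) :
    IsPolyhedralSet Pᶜ := by
  obtain ⟨n, B, hB, rfl⟩ := h
  rw [Set.compl_iUnion]
  exact poly_iInter _ fun i => basic_compl (hB i)

end PolyAux

open PolyAux in
/-- A polyhedral set covered by finitely many polyhedral sets can be partitioned into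
pairwise disjoint polyhedral pieces, each contained in one of the covering sets. -/
theorem polyhedral_cover_disjointify {m k : ℕ} (hm : 0 < m) (hk : 0 < k)
    (P : Set (Fin m → ℤ)) (hP : IsPolyhedralSet P)
    (X : Fin k → Set (Fin m → ℤ)) (hX : ∀ i, IsPolyhedralSet (X i))
    (hcover : P ⊆ ⋃ i, X i) :
    ∃ Y : Fin k → Set (Fin m → ℤ),
      (∀ i, IsPolyhedralSet (Y i)) ∧ (∀ i, Y i ⊆ X i) ∧
      (∀ i j, i ≠ j → Y i ∩ Y j = ∅) ∧ P = ⋃ i, Y i := by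
  classical
  refine ⟨fun i => P ∩ X i ∩ ⋂ j : Fin k, if j < i then (X j)ᶜ else Set.univ,
    ?_, ?_, ?_, ?_⟩
  · intro i
    refine poly_inter (poly_inter hP (hX i)) (poly_iInter _ fun j => ?_)
    split_ifs with h
    · exact poly_compl (hX j)
    · exact poly_univ
  · exact fun i z hz => hz.1.2
  · intro i j hij
    ext z
    simp only [Set.mem_inter_iff, Set.mem_iInter, Set.mem_empty_iff_false, iff_false]
    rintro ⟨⟨⟨-, hzi⟩, hi⟩, ⟨⟨-, hzj⟩, hj⟩⟩
    rcases lt_or_gt_of_ne hij with h | h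
    · have := hj i
      rw [if_pos h] at this
      exact this hzi
    · have := hi j
      rw [if_pos h] at this
      exact this hzj
  · ext z
    simp only [Set.mem_iUnion, Set.mem_inter_iff, Set.mem_iInter]
    constructor
    · intro hz
      have : ∃ i, z ∈ X i := by simpa using hcover hz
      let s : Finset (Fin k) := Finset.univ.filter fun i => z ∈ X i
      have hs : s.Nonempty := by
        obtain ⟨i, hi⟩ := this
        exact ⟨i, by simp [s, hi]⟩
      refine ⟨s.min' hs, ⟨hz, ?_⟩, ?_⟩
      · have := s.min'_mem hs
        simpa [s] using this
      · intro j
        split_ifs with h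
        · intro hj
          have : j ∈ s := by simp [s, hj]
          exact absurd (s.min'_le j this) (not_le.mpr h)
        · trivial
    · rintro ⟨i, ⟨⟨hzP, -⟩, -⟩⟩
      exact hzP
end
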